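/- arXiv:2312.03529 — 9 statements merged into one kernel-verified Lean document; each statement's English description precedes it below -/
import Mathlib

section
/- Let X be a submetrizable space and F a relatively pseudocompact subset of X. Then for any two coarser metrizable topologies σ₁, σ₂ on X, the closure of F in (X, σ₁) equals the closure of F in (X, σ₂). -/
universe u

def Submetrizable (X : Type u) [t : TopologicalSpace X] : Prop :=
  ∃ σ : TopologicalSpace X, t ≤ σ ∧ @TopologicalSpace.MetrizableSpace X σ

/-- `F` is relatively pseudocompact in `X` if every continuous real-valued function
on `X` is bounded on `F`. -/
def RelPseudocompact {X : Type u} [TopologicalSpace X] (F : Set X) : Prop :=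
  ∀ g : X → ℝ, Continuous g → ∃ M : ℝ, ∀ x ∈ F, |g x| ≤ M

open Filter Topology Metric Function

set_option linter.deprecated false in
lemma metrizable_inf_aux {X : Type u} {σ₁ σ₂ : TopologicalSpace X}
    (hm₁ : @TopologicalSpace.MetrizableSpace X σ₁)
    (hm₂ : @TopologicalSpace.MetrizableSpace X σ₂) :
    @TopologicalSpace.MetrizableSpace X (σ₁ ⊓ σ₂) := by
  letI tP : TopologicalSpace (X × X) := @instTopologicalSpaceProd X X σ₁ σ₂
  haveI hmP : @TopologicalSpace.MetrizableSpace (X × X) tP :=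
    @TopologicalSpace.metrizableSpace_prod X X σ₁ σ₂ hm₁ hm₂
  have hind : σ₁ ⊓ σ₂ = tP.induced (fun x : X => (x, x)) := by
    show σ₁ ⊓ σ₂ = TopologicalSpace.induced (fun x : X => (x, x))
      ((TopologicalSpace.induced Prod.fst σ₁) ⊓ (TopologicalSpace.induced Prod.snd σ₂))
    rw [induced_inf, induced_compose, induced_compose]
    rw [show (Prod.fst ∘ fun x : X => (x, x)) = id from rfl,
      show (Prod.snd ∘ fun x : X => (x, x)) = id from rfl,
      @induced_id X σ₁, @induced_id X σ₂]
  have hemb : @Topology.IsEmbedding X (X × X) (σ₁ ⊓ σ₂) tP (fun x => (x, x)) :=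
    @Topology.IsEmbedding.mk X (X × X) (σ₁ ⊓ σ₂) tP _
      (@Topology.IsInducing.mk X (X × X) (σ₁ ⊓ σ₂) tP _ hind)
      (fun a b h => congrArg Prod.fst h)
  exact @Topology.IsEmbedding.metrizableSpace X (X × X) (σ₁ ⊓ σ₂) tP hmP _ hemb

/-- Closures are antitone in the topology: a finer topology gives a smaller closure. -/
lemma closure_mono_topology {X : Type u} {s s' : TopologicalSpace X} (h : s ≤ s') (F : Set X) :
    @closure X s F ⊆ @closure X s' F := by
  have h1 : F ⊆ @closure X s' F := by letI := s'; exact subset_closure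
  have h2 : @IsClosed X s' (@closure X s' F) := by letI := s'; exact isClosed_closure
  have h3 : @IsClosed X s (@closure X s' F) := h2.mono h
  letI := s
  exact closure_minimal h1 h3

/-- Key lemma: if every `t`-continuous real function is bounded on `F`, where `t` refines
the metrizable instance topology, then the closure of `F` is compact. -/
lemma isCompact_closure_of_relPseudocompact {X : Type u} [MetricSpace X]
    (F : Set X)
    (hF : ∀ g : X → ℝ, Continuous g → ∃ M : ℝ, ∀ x ∈ F, |g x| ≤ M) :
    IsCompact (closure F) := by
  apply IsSeqCompact.isCompact
  intro x hx
  -- choose points of `F` close to the given sequence in the closure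
  have hy : ∀ n : ℕ, ∃ z ∈ F, dist (x n) z < 1 / (n + 1) := by
    intro n
    have h1 := (Metric.mem_closure_iff.mp (hx n)) (1 / (n + 1)) (by positivity)
    exact h1
  choose y hyF hyd using hy
  -- `y` has a cluster point
  have key : ∃ a : X, MapClusterPt a atTop y := by
    by_contra hcon
    push_neg at hcon
    -- the bump functions
    set f : ℕ → X → ℝ := fun n z => n * max 0 (1 - (n + 1) * dist z (y n)) with hf
    have hf_nonneg : ∀ n z, 0 ≤ f n z := fun n z => by
      have : (0:ℝ) ≤ max 0 (1 - (n + 1) * dist z (y n)) := le_max_left _ _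
      positivity
    have hf_cont : ∀ n, Continuous (f n) := by
      intro n
      exact continuous_const.mul
        (continuous_const.max (continuous_const.sub
          (continuous_const.mul (continuous_id.dist continuous_const))))
    have hf_supp : ∀ n z, z ∈ Function.support (f n) → dist z (y n) < 1 / (n + 1) := by
      intro n z hz
      by_contra hge
      push_neg at hge
      apply hz
      have hd : (1:ℝ) ≤ (n + 1) * dist z (y n) := by
        rw [div_le_iff₀ (by positivity)] at hge
        linarith
      have : max 0 (1 - (n + 1) * dist z (y n)) = 0 := max_eq_left (by linarith)
      simp [hf, this]
    have hf_self : ∀ n, f n (y n) = n := by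
      intro n
      simp [hf]
    -- local finiteness of the supports
    have hLF : LocallyFinite fun n => Function.support (f n) := by
      intro z
      have hz := hcon z
      rw [mapClusterPt_iff_frequently] at hz
      push_neg at hz
      obtain ⟨s, hs, hev⟩ := hz
      obtain ⟨N, hN⟩ := eventually_atTop.mp hev
      obtain ⟨ε, hε, hball⟩ := Metric.mem_nhds_iff.mp hs
      refine ⟨ball z (ε / 2), ball_mem_nhds _ (by positivity), ?_⟩
      apply Set.Finite.subset (Set.finite_Iio (max N (Nat.ceil (2 / ε))))
      intro n hn
      obtain ⟨w, hw1, hw2⟩ := hn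
      by_contra hbig
      rw [Set.mem_Iio, not_lt] at hbig  -- n ≥ max N ⌈2/ε⌉
      have hnN : N ≤ n := le_trans (le_max_left _ _) hbig
      have hnC : Nat.ceil (2 / ε) ≤ n := le_trans (le_max_right _ _) hbig
      have h2e : 2 / ε ≤ (n:ℝ) + 1 := by
        calc (2:ℝ) / ε ≤ Nat.ceil (2 / ε) := Nat.le_ceil _
          _ ≤ (n:ℝ) := by exact_mod_cast hnC
          _ ≤ (n:ℝ) + 1 := by linarith
      have hsmall : 1 / ((n:ℝ) + 1) ≤ ε / 2 := by
        rw [div_le_div_iff₀ (by positivity) (by norm_num)]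
        nlinarith [mul_le_mul_of_nonneg_right h2e (le_of_lt hε),
          (by field_simp : (2 / ε) * ε = 2)]
      have hd1 : dist w (y n) < 1 / (n + 1) := hf_supp n w hw1
      have hd2 : dist w z < ε / 2 := mem_ball.mp hw2
      have : dist (y n) z < ε := by
        calc dist (y n) z ≤ dist (y n) w + dist w z := dist_triangle _ _ _
          _ < 1 / (n + 1) + ε / 2 := by
              rw [dist_comm (y n) w]; exact add_lt_add_of_lt_of_lt hd1 hd2
          _ ≤ ε / 2 + ε / 2 := by linarith
          _ = ε := by ring
      exact hN n hnN (hball (mem_ball.mpr this))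
    -- define the unbounded continuous function
    set g : X → ℝ := fun z => ∑ᶠ n, f n z with hg
    have hgc : Continuous g := continuous_finsum hf_cont hLF
    obtain ⟨M, hM⟩ := hF g hgc
    set n := Nat.ceil M + 1 with hn
    have hgyn : (n:ℝ) ≤ g (y n) := by
      have hfin : (Function.support fun i => f i (y n)).Finite := by
        apply Set.Finite.subset (hLF.point_finite (y n))
        intro i hi
        exact hi
      have := single_le_finsum n hfin (fun i => hf_nonneg i (y n))
      rw [hf_self n] at this
      exact this
    have hMy := hM (y n) (hyF n)
    have : g (y n) ≤ M := le_trans (le_abs_self _) hMy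
    have hMn : M < (n:ℝ) := by
      have h1 : M ≤ (Nat.ceil M : ℝ) := Nat.le_ceil M
      have h2 : ((Nat.ceil M : ℕ) : ℝ) < (n : ℝ) := by exact_mod_cast Nat.lt_succ_self _
      linarith
    linarith
  obtain ⟨a, ha⟩ := key
  obtain ⟨φ, hφ, hconv⟩ := TopologicalSpace.FirstCountableTopology.tendsto_subseq ha
  refine ⟨a, ?_, φ, hφ, ?_⟩
  · exact mem_closure_of_tendsto hconv (Filter.Eventually.of_forall fun k => hyF (φ k))
  · -- x ∘ φ → a
    rw [tendsto_iff_dist_tendsto_zero]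
    have h1 : Tendsto (fun k => dist (x (φ k)) (y (φ k))) atTop (𝓝 0) := by
      apply squeeze_zero (fun k => dist_nonneg) (g := fun k : ℕ => 1 / (k + 1))
      · intro k
        have h3 : dist (x (φ k)) (y (φ k)) < 1 / (φ k + 1) := hyd (φ k)
        have h4 : (1:ℝ) / (φ k + 1) ≤ 1 / (k + 1) := by
          apply one_div_le_one_div_of_le (by positivity)
          have hk : k ≤ φ k := hφ.le_apply
          have hk' : (k:ℝ) ≤ (φ k : ℝ) := by exact_mod_cast hk
          push_cast
          linarith [hk']
        linarith
      · exact tendsto_one_div_add_atTop_nhds_zero_nat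
    have h2 : Tendsto (fun k => dist (y (φ k)) a) atTop (𝓝 0) :=
      tendsto_iff_dist_tendsto_zero.mp hconv
    apply squeeze_zero (fun k => dist_nonneg)
      (g := fun k => dist (x (φ k)) (y (φ k)) + dist (y (φ k)) a)
    · intro k
      exact dist_triangle _ _ _
    · have := h1.add h2
      simpa using this


/-- If `X` is submetrizable and `F ⊆ X` is relatively pseudocompact, then the closure of `F`
is the same in all coarser metrizable topologies on `X`. -/
theorem closure_eq_of_relPseudocompact {X : Type u} [t : TopologicalSpace X]
    (hX : Submetrizable X) (F : Set X) (hF : RelPseudocompact F)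
    (σ₁ σ₂ : TopologicalSpace X) (h₁ : t ≤ σ₁) (h₂ : t ≤ σ₂)
    (hm₁ : @TopologicalSpace.MetrizableSpace X σ₁)
    (hm₂ : @TopologicalSpace.MetrizableSpace X σ₂) :
    @closure X σ₁ F = @closure X σ₂ F := by
  set σ₀ := σ₁ ⊓ σ₂ with hσ₀
  have h₀ : t ≤ σ₀ := le_inf h₁ h₂
  have hm₀ : @TopologicalSpace.MetrizableSpace X σ₀ := metrizable_inf_aux hm₁ hm₂
  -- the closure of F in σ₀ is σ₀-compact
  have hK : @IsCompact X σ₀ (@closure X σ₀ F) := by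
    letI : MetricSpace X := @TopologicalSpace.metrizableSpaceMetric X σ₀ hm₀
    have hF' : ∀ g : X → ℝ, Continuous g → ∃ M : ℝ, ∀ x ∈ F, |g x| ≤ M := by
      intro g hg
      exact hF g (continuous_le_dom h₀ hg)
    exact isCompact_closure_of_relPseudocompact F hF'
  have main : ∀ (σ : TopologicalSpace X), σ₀ ≤ σ →
      @TopologicalSpace.MetrizableSpace X σ → @closure X σ F = @closure X σ₀ F := by
    intro σ hle hm
    apply Set.Subset.antisymm
    · -- closure σ F ⊆ closure σ₀ F since the latter is σ-compact hence σ-closed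
      have hKc : @IsCompact X σ (@closure X σ₀ F) := by
        have hid : Continuous[σ₀, σ] id := continuous_id_of_le hle
        have himg := @IsCompact.image X X σ₀ σ (@closure X σ₀ F) id hK hid
        simpa using himg
      have hcl : @IsClosed X σ (@closure X σ₀ F) := by
        letI := σ
        haveI := hm
        exact hKc.isClosed
      have hsub : F ⊆ @closure X σ₀ F := by letI := σ₀; exact subset_closure
      letI := σ
      exact closure_minimal hsub hcl
    · exact closure_mono_topology hle F
  rw [main σ₁ inf_le_left hm₁, main σ₂ inf_le_right hm₂]
end

section
/- Let f : X → Y be a closed continuous surjection and let y ∈ Y be a q-point. Then the boundary of f⁻¹(y) in X is relatively pseudocompact. -/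
universe u v

/-- `y` is a q-point: there is a sequence of open neighbourhoods `U i` of `y` such that any
choice of pairwise distinct points `x i ∈ U i` has an accumulation point. -/
def IsQPoint {Y : Type v} [TopologicalSpace Y] (y : Y) : Prop :=
  ∃ U : ℕ → Set Y, (∀ i, IsOpen (U i) ∧ y ∈ U i) ∧
    ∀ x : ℕ → Y, (∀ i, x i ∈ U i) → Function.Injective x →
      ∃ p : Y, p ∈ closure (Set.range x \ {p})

/-- Any subset of the range of a sequence on which a continuous real function blows up
is closed (in a T1 space). -/
lemma aux_closed_of_unbounded {X : Type u} [TopologicalSpace X] [T1Space X]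
    (g : X → ℝ) (hg : Continuous g) (w : ℕ → X) (hw : ∀ n : ℕ, (n : ℝ) < |g (w n)|)
    (S : Set X) (hS : S ⊆ Set.range w) : IsClosed S := by
  rw [← closure_subset_iff_isClosed]
  intro p hp
  obtain ⟨N, hN⟩ := exists_nat_gt (|g p| + 1)
  set V : Set X := {x | |g x| < |g p| + 1} with hV
  have hVopen : IsOpen V := isOpen_lt hg.abs continuous_const
  have hpV : p ∈ V := by simp [hV]
  have hfin : (S ∩ V).Finite := by
    apply ((Set.finite_Iio N).image w).subset
    rintro q ⟨hqS, hqV⟩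
    obtain ⟨n, rfl⟩ := hS hqS
    refine ⟨n, ?_, rfl⟩
    have h1 := hw n
    have h2 : |g (w n)| < |g p| + 1 := hqV
    have : (n : ℝ) < (N : ℝ) := by linarith
    exact_mod_cast this
  have hcl : p ∈ closure (S ∩ V) := by
    rw [mem_closure_iff] at hp ⊢
    intro o ho hpo
    obtain ⟨q, hq⟩ := hp (o ∩ V) (ho.inter hVopen) ⟨hpo, hpV⟩
    exact ⟨q, ⟨hq.1.1, hq.2, hq.1.2⟩⟩
  have := hfin.isClosed.closure_eq ▸ hcl
  exact this.1

/-- If `f : X → Y` is a closed continuous surjection and `y` is a q-point, then the boundary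
of the fiber `f⁻¹(y)` is relatively pseudocompact. -/
theorem relPseudocompact_frontier_fiber {X : Type u} {Y : Type v}
    [TopologicalSpace X] [TopologicalSpace Y] [T1Space X] [T1Space Y]
    (f : X → Y) (hf : Continuous f) (hsurj : Function.Surjective f)
    (hclosed : IsClosedMap f) (y : Y) (hy : IsQPoint y) :
    RelPseudocompact (frontier (f ⁻¹' {y})) := by
  obtain ⟨U, hU, hUseq⟩ := hy
  intro g hg
  classical
  by_contra hcon
  push_neg at hcon
  -- pick unbounded points in the frontier
  have hx : ∀ n : ℕ, ∃ x ∈ frontier (f ⁻¹' {y}), (n : ℝ) < |g x| := fun n => hcon n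
  choose x hxF hxg using hx
  have hfib_closed : IsClosed (f ⁻¹' {y}) := isClosed_singleton.preimage hf
  have hxfib : ∀ n, f (x n) = y := fun n => hfib_closed.frontier_subset (hxF n)
  have hxcl : ∀ n, x n ∈ closure ((f ⁻¹' {y})ᶜ) := by
    intro n
    have := hxF n
    rw [frontier_eq_closure_inter_closure] at this
    exact this.2
  -- choice step: given any finite set of already used values, find a new point
  have H : ∀ (n : ℕ) (s : Finset Y), ∃ z : X,
      (n : ℝ) < |g z| ∧ f z ∈ U n ∧ f z ≠ y ∧ f z ∉ ((↑s : Set Y) \ {y}) := by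
    intro n s
    have hsd : IsClosed ((↑s : Set Y) \ {y}) := (s.finite_toSet.diff).isClosed
    set O : Set X := f ⁻¹' (U n \ ((↑s : Set Y) \ {y})) ∩ {x | (n : ℝ) < |g x|} with hO
    have hOopen : IsOpen O :=
      (( (hU n).1.sdiff hsd).preimage hf).inter (isOpen_lt continuous_const hg.abs)
    have hxO : x n ∈ O := by
      refine ⟨?_, hxg n⟩
      simp only [Set.mem_preimage, hxfib n, Set.mem_diff]
      exact ⟨(hU n).2, fun h => h.2 rfl⟩
    have := (mem_closure_iff.mp (hxcl n)) O hOopen hxO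
    obtain ⟨z, hzO, hzc⟩ := this
    refine ⟨z, hzO.2, (hzO.1).1, ?_, (hzO.1).2⟩
    intro h
    exact hzc (by simp [h])
  choose z hz1 hz2 hz3 hz4 using H
  -- build the sequence of used values
  let s : ℕ → Finset Y := fun n => Nat.rec ∅ (fun k sk => insert (f (z k sk)) sk) n
  have hs_succ : ∀ n, s (n + 1) = insert (f (z n (s n))) (s n) := fun n => rfl
  set w : ℕ → X := fun n => z n (s n) with hw
  have hmem : ∀ m n, m < n → f (w m) ∈ s n := by
    intro m n hmn
    induction n with
    | zero => omega
    | succ k ih =>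
      rw [hs_succ]
      rcases Nat.lt_succ_iff_lt_or_eq.mp hmn with h | h
      · exact Finset.mem_insert_of_mem (ih h)
      · subst h; exact Finset.mem_insert_self _ _
  have hnotmem : ∀ n, f (w n) ∉ s n := by
    intro n hmem'
    exact hz4 n (s n) ⟨hmem', hz3 n (s n)⟩
  have hinj : Function.Injective (fun n => f (w n)) := by
    intro a b hab
    by_contra hne
    have hab' : f (w a) = f (w b) := hab
    wlog hlt : a < b generalizing a b
    · exact this hab.symm (Ne.symm hne) hab'.symm (by omega)
    exact hnotmem b (hab' ▸ hmem a b hlt)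
  obtain ⟨p, hp⟩ := hUseq (fun n => f (w n)) (fun n => hz2 n (s n)) hinj
  -- the set S of points of w whose image is not p
  set S : Set X := w '' {n | f (w n) ≠ p} with hSdef
  have hSclosed : IsClosed S :=
    aux_closed_of_unbounded g hg w (fun n => hz1 n (s n)) S (by
      rintro q ⟨n, _, rfl⟩; exact ⟨n, rfl⟩)
  have himg : f '' S = Set.range (fun n => f (w n)) \ {p} := by
    ext q
    constructor
    · rintro ⟨a, ⟨n, hn, rfl⟩, rfl⟩
      exact ⟨⟨n, rfl⟩, hn⟩
    · rintro ⟨⟨n, rfl⟩, hq⟩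
      exact ⟨w n, ⟨n, hq, rfl⟩, rfl⟩
  have hclosed' : IsClosed (f '' S) := hclosed S hSclosed
  rw [himg] at hclosed'
  have : p ∈ Set.range (fun n => f (w n)) \ {p} := hclosed'.closure_eq ▸ hp
  exact this.2 rfl
end

section
/- If p is a limit point of a set A in a space X and there is a Gδ-subset G of X containing p with G ∩ (A ∖ {p}) = ∅, then any hereditarily closure-preserving collection of neighbourhoods of p is finite. -/
universe u

/-- A family `𝔉` of subsets is hereditarily closure-preserving if for every subfamily `G ⊆ 𝔉`
and every choice of subsets `B F ⊆ F` for `F ∈ G`, the closure of the union is the union of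
the closures. -/
def HCP {X : Type u} [TopologicalSpace X] (𝔉 : Set (Set X)) : Prop :=
  ∀ G ⊆ 𝔉, ∀ B : Set X → Set X, (∀ F ∈ G, B F ⊆ F) →
    closure (⋃ F ∈ G, B F) = ⋃ F ∈ G, closure (B F)

/-- If `p` is a limit point of `A` and some Gδ set `G` contains `p` and misses `A \ {p}`,
then every hereditarily closure-preserving collection of neighbourhoods of `p` is finite. -/
theorem hcp_nhds_finite {X : Type u} [TopologicalSpace X] (A : Set X) (p : X)
    (hp : p ∈ closure (A \ {p})) (G : Set X) (hG : IsGδ G) (hpG : p ∈ G)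
    (hGA : G ∩ (A \ {p}) = ∅)
    (𝔉 : Set (Set X)) (h𝔉 : HCP 𝔉) (hnhds : ∀ F ∈ 𝔉, F ∈ nhds p) :
    𝔉.Finite := by
  classical
  by_contra hfin
  have hinf : 𝔉.Infinite := hfin
  -- Write G as a countable intersection of open sets U n containing p.
  obtain ⟨U, hUopen, hGU⟩ := isGδ_iff_eq_iInter_nat.mp hG
  have hpU : ∀ n, p ∈ U n := by
    intro n
    have := hGU ▸ hpG
    exact Set.mem_iInter.mp this n
  -- Choose countably many distinct members of 𝔉.
  let e := hinf.natEmbedding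
  let f : ℕ → Set X := fun n => (e n : Set X)
  have hfinj : Function.Injective f := fun a b h => e.injective (Subtype.ext h)
  have hfmem : ∀ n, f n ∈ 𝔉 := fun n => (e n).2
  have hfnhds : ∀ n, f n ∈ nhds p := fun n => hnhds _ (hfmem n)
  have hfint : ∀ n, p ∈ interior (f n) := fun n => mem_interior_iff_mem_nhds.mpr (hfnhds n)
  -- The decreasing sets P n.
  let P : ℕ → Set X := fun n => (⋂ i ∈ Finset.range (n + 1), (f i ∩ U i)) ∩ (A \ {p})
  have hPsub : ∀ n, P n ⊆ f n := by
    intro n x hx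
    have := Set.mem_iInter₂.mp hx.1 n (Finset.mem_range.mpr (Nat.lt_succ_self n))
    exact this.1
  have hPmono : ∀ n, P (n + 1) ⊆ P n := by
    intro n x hx
    refine ⟨Set.mem_iInter₂.mpr fun i hi => ?_, hx.2⟩
    exact Set.mem_iInter₂.mp hx.1 i (Finset.mem_range.mpr (Nat.lt_succ_of_lt (Finset.mem_range.mp hi)))
  -- The intersection of all P n is empty.
  have hPempty : ∀ x, ¬ ∀ n, x ∈ P n := by
    intro x hx
    have hxA : x ∈ A \ {p} := (hx 0).2
    have hxG : x ∈ G := by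
      rw [hGU]
      refine Set.mem_iInter.mpr fun n => ?_
      have := Set.mem_iInter₂.mp (hx n).1 n (Finset.mem_range.mpr (Nat.lt_succ_self n))
      exact this.2
    have : x ∈ G ∩ (A \ {p}) := ⟨hxG, hxA⟩
    rw [hGA] at this
    exact this
  -- P 0 is the union of the differences.
  have hP0 : P 0 = ⋃ n, (P n \ P (n + 1)) := by
    ext x
    constructor
    · intro hx
      have hex : ∃ n, x ∉ P n := by
        by_contra h
        push_neg at h
        exact hPempty x h
      have hlt : Nat.find hex ≠ 0 := by
        intro h0
        exact (h0 ▸ Nat.find_spec hex) hx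
      obtain ⟨m, hm⟩ := Nat.exists_eq_succ_of_ne_zero hlt
      refine Set.mem_iUnion.mpr ⟨m, ?_, ?_⟩
      · by_contra hxm
        exact absurd (Nat.find_min hex (hm ▸ Nat.lt_succ_self m)) (by simpa using hxm)
      · have := Nat.find_spec hex
        rwa [hm] at this
    · intro hx
      obtain ⟨n, hn⟩ := Set.mem_iUnion.mp hx
      -- P n ⊆ P 0 by induction
      have : ∀ k, P k ⊆ P 0 := by
        intro k
        induction k with
        | zero => exact subset_rfl
        | succ m ih => exact (hPmono m).trans ih
      exact this n hn.1
  -- p is in the closure of P 0.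
  have hclP0 : p ∈ closure (P 0) := by
    rw [mem_closure_iff]
    intro o ho hpo
    have hopen : IsOpen (o ∩ (interior (f 0) ∩ U 0)) :=
      ho.inter ((isOpen_interior).inter (hUopen 0))
    have hpmem : p ∈ o ∩ (interior (f 0) ∩ U 0) := ⟨hpo, hfint 0, hpU 0⟩
    obtain ⟨x, hx1, hx2⟩ := mem_closure_iff.mp hp _ hopen hpmem
    refine ⟨x, hx1.1, ?_, hx2⟩
    refine Set.mem_iInter₂.mpr fun i hi => ?_
    have hi0 : i = 0 := Nat.lt_one_iff.mp (Finset.mem_range.mp hi)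
    subst hi0
    exact ⟨interior_subset hx1.2.1, hx1.2.2⟩
  -- p is not in the closure of any difference P n \ P (n+1).
  have hnotcl : ∀ n, p ∉ closure (P n \ P (n + 1)) := by
    intro n hmem
    have hsub : P n \ P (n + 1) ⊆ (interior (f (n + 1)) ∩ U (n + 1))ᶜ := by
      intro x hx hxo
      apply hx.2
      refine ⟨Set.mem_iInter₂.mpr fun i hi => ?_, hx.1.2⟩
      rcases Nat.lt_succ_iff_lt_or_eq.mp (Finset.mem_range.mp hi) with h | h
      · exact Set.mem_iInter₂.mp hx.1.1 i (Finset.mem_range.mpr h)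
      · subst h
        exact ⟨interior_subset hxo.1, hxo.2⟩
    have hclosed : IsClosed ((interior (f (n + 1)) ∩ U (n + 1))ᶜ) :=
      (isOpen_interior.inter (hUopen (n + 1))).isClosed_compl
    have := closure_minimal hsub hclosed hmem
    exact this ⟨hfint (n + 1), hpU (n + 1)⟩
  -- Apply HCP.
  let g : Set X → ℕ := Function.invFun f
  have hgf : ∀ n, g (f n) = n := fun n => Function.leftInverse_invFun hfinj n
  let B : Set X → Set X := fun S => P (g S) \ P (g S + 1)
  have hBf : ∀ n, B (f n) = P n \ P (n + 1) := by
    intro n; simp only [B, hgf]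
  have hsub𝔉 : Set.range f ⊆ 𝔉 := by
    rintro _ ⟨n, rfl⟩; exact hfmem n
  have hBsub : ∀ F ∈ Set.range f, B F ⊆ F := by
    rintro _ ⟨n, rfl⟩
    rw [hBf n]
    exact (Set.diff_subset).trans (hPsub n)
  have hHCP := h𝔉 (Set.range f) hsub𝔉 B hBsub
  rw [Set.biUnion_range, Set.biUnion_range] at hHCP
  simp only [hBf] at hHCP
  rw [← hP0] at hHCP
  rw [hHCP] at hclP0
  obtain ⟨n, hn⟩ := Set.mem_iUnion.mp hclP0
  exact hnotcl n hn
end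

section
/- Let f : X → Y be a closed continuous surjection where X is submetrizable, Y is functionally Hausdorff, and y ∈ Y is a q-point. Then for every coarser metrizable topology τ on X, the boundary of f⁻¹(y) in the topology σ(τ,f) (generated by τ and preimages of open sets of Y) is a compact subset of (X, σ(τ,f)). -/
universe u v

def FunctionallyHausdorff (Y : Type v) [TopologicalSpace Y] : Prop :=
  ∀ a b : Y, a ≠ b → ∃ g : Y → ℝ, Continuous g ∧ (∀ z, g z ∈ Set.Icc (0:ℝ) 1) ∧
    g a = 0 ∧ g b = 1

def sigmaTop {X : Type u} {Y : Type v} (τ : TopologicalSpace X) (tY : TopologicalSpace Y)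
    (f : X → Y) : TopologicalSpace X :=
  τ ⊓ TopologicalSpace.induced f tY

open Filter Topology Set

/-- The sigma topology built from the metric topology of a metric space. -/
abbrev sigT {X : Type u} {Y : Type v} [MetricSpace X] (tY : TopologicalSpace Y)
    (f : X → Y) : TopologicalSpace X :=
  sigmaTop UniformSpace.toTopologicalSpace tY f

/-! ### Generic helpers stated with an explicit topology -/

section Helpers

variable {Z : Type u} {W : Type v}

lemma Hfreq {t : TopologicalSpace Z} {u : ℕ → Z} {r : Z}
    (h : @MapClusterPt Z t ℕ r atTop u) {N : Set Z} (hN : N ∈ @nhds Z t r) :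
    ∃ᶠ k in atTop, u k ∈ N := by
  letI := t; exact mapClusterPt_iff_frequently.1 h N hN

lemma Hmem_nhds {t : TopologicalSpace Z} {o : Set Z} {r : Z}
    (ho : @IsOpen Z t o) (hr : r ∈ o) : o ∈ @nhds Z t r := by
  letI := t; exact ho.mem_nhds hr

lemma Hclosure_open {t : TopologicalSpace Z} {s : Set Z} {r : Z}
    (h : r ∈ @closure Z t s) {o : Set Z} (ho : @IsOpen Z t o) (hro : r ∈ o) :
    (o ∩ s).Nonempty := by
  letI := t; exact mem_closure_iff.1 h o ho hro

lemma Hclosure_nhds {t : TopologicalSpace Z} {s : Set Z} {r : Z} :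
    r ∈ @closure Z t s ↔ ∀ N ∈ @nhds Z t r, (N ∩ s).Nonempty := by
  letI := t; exact mem_closure_iff_nhds

lemma Hclosed_of {t : TopologicalSpace Z} {s : Set Z} (h : @closure Z t s ⊆ s) :
    @IsClosed Z t s := by
  letI := t; exact isClosed_of_closure_subset h

lemma Hfin_closed {t : TopologicalSpace Z} (h1 : ∀ a : Z, @IsClosed Z t {a})
    {s : Set Z} (hs : s.Finite) : @IsClosed Z t s := by
  letI := t
  haveI : T1Space Z := ⟨h1⟩
  exact hs.isClosed

lemma Hfrontier_sub {t : TopologicalSpace Z} {s : Set Z} :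
    @frontier Z t s ⊆ @closure Z t s := by
  letI := t; exact frontier_subset_closure

lemma Hfrontier_eq {t : TopologicalSpace Z} {s : Set Z} :
    @frontier Z t s = @closure Z t s ∩ @closure Z t sᶜ := by
  letI := t; exact frontier_eq_closure_inter_closure

lemma Hisclosed_frontier {t : TopologicalSpace Z} {s : Set Z} :
    @IsClosed Z t (@frontier Z t s) := by
  letI := t; exact isClosed_frontier

lemma Hpreimage_closed {t1 : TopologicalSpace Z} {t2 : TopologicalSpace W} {f : Z → W}
    (hf : @Continuous Z W t1 t2 f) {s : Set W} (hs : @IsClosed W t2 s) :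
    @IsClosed Z t1 (f ⁻¹' s) := by
  letI := t1; letI := t2; exact hs.preimage hf

lemma Hclosed_mono {t1 t2 : TopologicalSpace Z} (h : t1 ≤ t2) {s : Set Z}
    (hs : @IsClosed Z t2 s) : @IsClosed Z t1 s := hs.mono h

lemma Hopen_mono {t1 t2 : TopologicalSpace Z} (h : t1 ≤ t2) {s : Set Z}
    (hs : @IsOpen Z t2 s) : @IsOpen Z t1 s := hs.mono h

lemma Hopen_preimage {t1 : TopologicalSpace Z} {t2 : TopologicalSpace W} {f : Z → W}
    (hf : @Continuous Z W t1 t2 f) {s : Set W} (hs : @IsOpen W t2 s) :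
    @IsOpen Z t1 (f ⁻¹' s) := by
  letI := t1; letI := t2; exact hs.preimage hf

lemma Hopen_inter {t : TopologicalSpace Z} {s1 s2 : Set Z} (h1 : @IsOpen Z t s1)
    (h2 : @IsOpen Z t s2) : @IsOpen Z t (s1 ∩ s2) := by
  letI := t; exact h1.inter h2

lemma Hopen_biInter {t : TopologicalSpace Z} {ι : Type*} {s : Finset ι} {g : ι → Set Z}
    (h : ∀ a ∈ s, @IsOpen Z t (g a)) : @IsOpen Z t (⋂ a ∈ s, g a) := by
  letI := t; exact isOpen_biInter_finset h

lemma Hcompl_open {t : TopologicalSpace Z} {s : Set Z} (h : @IsClosed Z t s) :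
    @IsOpen Z t sᶜ := by
  letI := t; exact h.isOpen_compl

lemma Hclosure_eq {t : TopologicalSpace Z} {s : Set Z} (h : @IsClosed Z t s) :
    @closure Z t s = s := by
  letI := t; exact h.closure_eq

lemma Hcont_comp {t1 : TopologicalSpace Z} {t2 : TopologicalSpace W} {f : Z → W}
    (hf : @Continuous Z W t1 t2 f) {g : W → ℝ} (hg : @Continuous W ℝ t2 _ g) :
    @Continuous Z ℝ t1 _ (fun v => g (f v)) := by
  letI := t1; letI := t2; exact hg.comp hf

lemma Hmcp_of_tendsto {t : TopologicalSpace Z} {u : ℕ → Z} {r : Z}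
    (h : Tendsto u atTop (@nhds Z t r)) : @MapClusterPt Z t ℕ r atTop u := by
  letI := t; exact h.mapClusterPt

lemma Hmcp_comp {t : TopologicalSpace Z} {u : ℕ → Z} {φ : ℕ → ℕ}
    (hφ : Tendsto φ atTop atTop) {r : Z} (h : @MapClusterPt Z t ℕ r atTop (u ∘ φ)) :
    @MapClusterPt Z t ℕ r atTop u := by
  letI := t; exact MapClusterPt.of_comp hφ h

lemma Htendsto_const {t : TopologicalSpace Z} {a : Z} :
    Tendsto (fun _ : ℕ => a) atTop (@nhds Z t a) := by
  letI := t; exact tendsto_const_nhds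

end Helpers

lemma Hone_div_le {a b : ℕ} (h : a ≤ b) : (1 : ℝ) / (b + 1) ≤ 1 / (a + 1) := by
  apply one_div_le_one_div_of_le (by positivity)
  have : (a : ℝ) ≤ b := by exact_mod_cast h
  linarith

section Metric

variable {X : Type u} {Y : Type v}

/-- From a cluster point in a metric space, extract a convergent subsequence. -/
lemma metric_cluster_subseq [MetricSpace X] {x : ℕ → X} {q : X}
    (h : MapClusterPt q atTop x) :
    ∃ φ : ℕ → ℕ, StrictMono φ ∧ Tendsto (x ∘ φ) atTop (𝓝 q) := by
  have hfreq : ∀ n : ℕ, ∃ᶠ k in atTop, x k ∈ Metric.ball q (1 / (n + 1)) := fun n =>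
    mapClusterPt_iff_frequently.1 h _ (Metric.ball_mem_nhds q (by positivity))
  obtain ⟨φ, hφ, hφ2⟩ := extraction_forall_of_frequently hfreq
  refine ⟨φ, hφ, Metric.tendsto_atTop.2 fun ε hε => ?_⟩
  obtain ⟨N, hN⟩ := exists_nat_one_div_lt hε
  refine ⟨N, fun n hn => ?_⟩
  show dist (x (φ n)) q < ε
  have h1 : dist (x (φ n)) q < 1 / (n + 1) := Metric.mem_ball.1 (hφ2 n)
  have h2 : (1 : ℝ) / (n + 1) ≤ 1 / (N + 1) := Hone_div_le hn
  linarith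

end Metric

section Aux

variable {X : Type u} {Y : Type v}

/-- Core lemma: with a metric on `X` (giving the coarser metrizable topology), if `x` is a
sequence in the σ-boundary of the fiber over `y`, and `g` is a continuous function on `Y`
vanishing at `y` and equal to `1` at `f r` for every metric cluster point `r` of `x`, then
the q-point data at `y` together with closedness of `f` yields a contradiction. -/
lemma aux [MetricSpace X] [tY : TopologicalSpace Y] [T1Space Y]
    (f : X → Y) (y : Y)
    (hcl : ∀ s : Set X,
      @IsClosed X (sigmaTop UniformSpace.toTopologicalSpace tY f) s → IsClosed (f '' s))
    (U : ℕ → Set Y) (hUo : ∀ i, IsOpen (U i)) (hUy : ∀ i, y ∈ U i)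
    (hUm : ∀ i j, i ≤ j → U j ⊆ U i)
    (hUacc : ∀ w : ℕ → Y, (∀ i, w i ∈ U i) → Function.Injective w →
      ∃ p : Y, p ∈ closure (Set.range w \ {p}))
    (x : ℕ → X) (hxf : ∀ n, f (x n) = y)
    (hxcl : ∀ n, x n ∈
      @closure X (sigmaTop UniformSpace.toTopologicalSpace tY f) (f ⁻¹' {y})ᶜ)
    (g : Y → ℝ) (hgc : Continuous g) (hgy : g y = 0)
    (hg1 : ∀ r : X, MapClusterPt r atTop x → g (f r) = 1) : False := by
  classical
  have hστ : sigT tY f ≤ (UniformSpace.toTopologicalSpace : TopologicalSpace X) :=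
    inf_le_left
  have hσi : sigT tY f ≤ TopologicalSpace.induced f tY := inf_le_right
  have hfσ : @Continuous X Y (sigT tY f) tY f := continuous_iff_le_induced.mpr hσi
  have hgfσ : @Continuous X ℝ (sigT tY f) _ (fun v => g (f v)) := Hcont_comp hfσ hgc
  have hsing : ∀ a : X, @IsClosed X (sigT tY f) {a} := by
    intro a
    have h0 : IsClosed ({a} : Set X) := isClosed_singleton
    exact Hclosed_mono hστ h0
  -- Step 1 : choice of the points `z k` close to `x (n k)`
  have hstep : ∀ s : Finset (ℕ × X),
      (∀ a ∈ s, f a.2 ≠ y ∧ dist a.2 (x a.1) < 1 / (a.1 + 1) ∧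
        f a.2 ∈ U a.1 ∧ g (f a.2) < 1 / (a.1 + 1)) →
      ∃ b : ℕ × X, (f b.2 ≠ y ∧ dist b.2 (x b.1) < 1 / (b.1 + 1) ∧
        f b.2 ∈ U b.1 ∧ g (f b.2) < 1 / (b.1 + 1)) ∧
        ∀ a ∈ s, a.1 < b.1 ∧ f b.2 ≠ f a.2 := by
    intro s hs
    set n : ℕ := (s.sup Prod.fst) + 1 with hn
    have hpos : (0 : ℝ) < 1 / (n + 1) := by positivity
    have h1 : @IsOpen X (sigT tY f) (Metric.ball (x n) (1 / (n + 1))) :=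
      Hopen_mono hστ Metric.isOpen_ball
    have h2 : @IsOpen X (sigT tY f) (f ⁻¹' (U n)) := Hopen_preimage hfσ (hUo n)
    have h3 : @IsOpen X (sigT tY f) ((fun v => g (f v)) ⁻¹' Set.Iio (1 / (n + 1))) :=
      Hopen_preimage hgfσ isOpen_Iio
    have h4 : @IsOpen X (sigT tY f) (⋂ a ∈ s, f ⁻¹' ({f a.2}ᶜ)) :=
      Hopen_biInter fun a _ => Hopen_preimage hfσ isClosed_singleton.isOpen_compl
    have hO : @IsOpen X (sigT tY f) (Metric.ball (x n) (1 / (n + 1)) ∩ f ⁻¹' (U n) ∩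
        (fun v => g (f v)) ⁻¹' Set.Iio (1 / (n + 1)) ∩ ⋂ a ∈ s, f ⁻¹' ({f a.2}ᶜ)) :=
      Hopen_inter (Hopen_inter (Hopen_inter h1 h2) h3) h4
    have hxO : x n ∈ Metric.ball (x n) (1 / (n + 1)) ∩ f ⁻¹' (U n) ∩
        (fun v => g (f v)) ⁻¹' Set.Iio (1 / (n + 1)) ∩ ⋂ a ∈ s, f ⁻¹' ({f a.2}ᶜ) := by
      refine ⟨⟨⟨Metric.mem_ball_self hpos, ?_⟩, ?_⟩, ?_⟩
      · show f (x n) ∈ U n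
        rw [hxf n]
        exact hUy n
      · show g (f (x n)) < 1 / (n + 1)
        rw [hxf n, hgy]
        exact hpos
      · refine Set.mem_iInter₂.2 fun a ha => ?_
        simp only [Set.mem_preimage, Set.mem_compl_iff, Set.mem_singleton_iff, hxf n]
        exact fun h => (hs a ha).1 h.symm
    obtain ⟨v, hvO, hvc⟩ := Hclosure_open (hxcl n) hO hxO
    refine ⟨(n, v), ⟨?_, ?_, ?_, ?_⟩, ?_⟩
    · simpa using hvc
    · exact Metric.mem_ball.1 hvO.1.1.1
    · exact hvO.1.1.2
    · exact hvO.1.2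
    · intro a ha
      constructor
      · exact Nat.lt_succ_of_le (Finset.le_sup (f := Prod.fst) ha)
      · have h5 := Set.mem_iInter₂.1 hvO.2 a ha
        simpa using h5
  obtain ⟨c, hcP, hcR⟩ := exists_seq_of_forall_finset_exists
    (fun q : ℕ × X => f q.2 ≠ y ∧ dist q.2 (x q.1) < 1 / (q.1 + 1) ∧
      f q.2 ∈ U q.1 ∧ g (f q.2) < 1 / (q.1 + 1))
    (fun a b => a.1 < b.1 ∧ f b.2 ≠ f a.2) hstep
  set nn : ℕ → ℕ := fun k => (c k).1 with hnn
  set z : ℕ → X := fun k => (c k).2 with hz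
  set w : ℕ → Y := fun k => f (c k).2 with hw
  have hnmono : StrictMono nn := fun a b h => (hcR a b h).1
  have hnk : ∀ k, k ≤ nn k := fun k => hnmono.le_apply
  have hwinj : Function.Injective w := by
    intro a b hab
    by_contra hne
    rcases lt_or_gt_of_ne hne with h | h
    · exact (hcR a b h).2 hab.symm
    · exact (hcR b a h).2 hab
  have hwU : ∀ k, w k ∈ U k := fun k => hUm k (nn k) (hnk k) (hcP k).2.2.1
  -- Step 2 : the sequence `z` has no σ-cluster point
  have hnoz : ∀ r : X, ¬ @MapClusterPt X (sigT tY f) ℕ r atTop z := by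
    intro r hr
    -- r is a metric cluster point of z
    have hrT : MapClusterPt r atTop z :=
      NeBot.mono hr (inf_le_inf_right _ (_root_.nhds_mono hστ))
    -- hence a metric cluster point of `x ∘ nn`
    have hxc : MapClusterPt r atTop (fun k => x (nn k)) := by
      rw [mapClusterPt_iff_frequently] at hrT ⊢
      intro s hs
      obtain ⟨ε, hε, hball⟩ := Metric.mem_nhds_iff.1 hs
      have hev : ∀ᶠ (k : ℕ) in atTop, (1 : ℝ) / (k + 1) < ε / 2 := by
        obtain ⟨N, hN⟩ := exists_nat_one_div_lt (half_pos hε)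
        filter_upwards [eventually_ge_atTop N] with k hk
        have := Hone_div_le hk
        linarith
      have hfr := (hrT _ (Metric.ball_mem_nhds r (half_pos hε))).and_eventually hev
      refine hfr.mono ?_
      rintro k ⟨hk1, hk2⟩
      apply hball
      have hd : dist (z k) (x (nn k)) < 1 / ((nn k : ℝ) + 1) := (hcP k).2.1
      have h5 : (1 : ℝ) / ((nn k : ℝ) + 1) ≤ 1 / (k + 1) := Hone_div_le (hnk k)
      have h6 : dist (z k) r < ε / 2 := Metric.mem_ball.1 hk1
      have h7 : dist (x (nn k)) r ≤ dist (x (nn k)) (z k) + dist (z k) r :=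
        dist_triangle _ _ _
      rw [dist_comm (x (nn k)) (z k)] at h7
      have h8 : dist (x (nn k)) r < ε := by linarith
      exact Metric.mem_ball.2 h8
    -- hence a metric cluster point of `x`
    have hxc2 : MapClusterPt r atTop x :=
      MapClusterPt.of_comp (φ := nn) hnmono.tendsto_atTop hxc
    have hg1r : g (f r) = 1 := hg1 r hxc2
    -- contradiction with the constraint `g (f (z k)) < 1/(k+1)`
    have hO2 : @IsOpen X (sigT tY f) ((fun v => g (f v)) ⁻¹' Set.Ioi (1 / 2 : ℝ)) :=
      Hopen_preimage hgfσ isOpen_Ioi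
    have hrO : r ∈ (fun v => g (f v)) ⁻¹' Set.Ioi (1 / 2 : ℝ) := by
      simp only [Set.mem_preimage, Set.mem_Ioi, hg1r]
      norm_num
    have hfr2 : ∃ᶠ k in atTop, z k ∈ (fun v => g (f v)) ⁻¹' Set.Ioi (1 / 2 : ℝ) :=
      Hfreq hr (Hmem_nhds hO2 hrO)
    have hev2 : ∀ᶠ k in atTop, z k ∉ (fun v => g (f v)) ⁻¹' Set.Ioi (1 / 2 : ℝ) := by
      filter_upwards [eventually_ge_atTop 1] with k hk
      simp only [Set.mem_preimage, Set.mem_Ioi, not_lt]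
      have h6 : g (f (z k)) < 1 / ((nn k : ℝ) + 1) := (hcP k).2.2.2
      have h7 : (1 : ℝ) / ((nn k : ℝ) + 1) ≤ 1 / ((k : ℝ) + 1) := Hone_div_le (hnk k)
      have h8 : (1 : ℝ) / ((k : ℝ) + 1) ≤ 1 / 2 := by
        apply one_div_le_one_div_of_le
        · norm_num
        · have : (1 : ℝ) ≤ (k : ℝ) := by exact_mod_cast hk
          linarith
      linarith
    exact (hfr2.and_eventually hev2).exists.elim fun k hk => hk.2 hk.1
  -- Step 3 : every subset of the range of `z` is σ-closed
  have hsub : ∀ S : Set ℕ, @IsClosed X (sigT tY f) (z '' S) := by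
    intro S
    apply Hclosed_of
    intro r hrcl
    by_contra hrS
    obtain ⟨N, hN, M, hM, hNM⟩ :=
      Filter.inf_eq_bot_iff.1 (Filter.not_neBot.mp (hnoz r))
    obtain ⟨K, hK⟩ := Filter.mem_atTop_sets.1 (Filter.mem_map.1 hM)
    set F : Set X := z '' (S ∩ Set.Iio K) \ {r} with hF
    have hFfin : F.Finite :=
      (((Set.finite_Iio K).subset Set.inter_subset_right).image z).subset Set.diff_subset
    have hFc : @IsClosed X (sigT tY f) F := Hfin_closed hsing hFfin
    have hrF : r ∈ Fᶜ := fun h => h.2 rfl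
    have hN' : N ∩ Fᶜ ∈ @nhds X (sigT tY f) r :=
      Filter.inter_mem hN (Hmem_nhds (Hcompl_open hFc) hrF)
    obtain ⟨v, ⟨hvN, hvF⟩, hvS⟩ := Hclosure_nhds.1 hrcl _ hN'
    obtain ⟨k, hkS, rfl⟩ := hvS
    by_cases hk : K ≤ k
    · exact (Set.eq_empty_iff_forall_notMem.1 hNM) (z k) ⟨hvN, hK k hk⟩
    · exact hvF ⟨⟨k, ⟨hkS, lt_of_not_ge hk⟩, rfl⟩,
        fun h => hrS (h ▸ ⟨k, hkS, rfl⟩)⟩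
  -- Step 4 : contradiction with the q-point property
  obtain ⟨p, hp⟩ := hUacc w hwU hwinj
  have hTcl : IsClosed (w '' {k | w k ≠ p}) := by
    have h1 := hcl _ (hsub {k | w k ≠ p})
    rwa [← Set.image_comp] at h1
  have hsubset : Set.range w \ {p} ⊆ w '' {k | w k ≠ p} := by
    rintro q ⟨⟨k, rfl⟩, hq⟩
    exact ⟨k, by simpa using hq, rfl⟩
  have hpmem : p ∈ w '' {k | w k ≠ p} := closure_minimal hsubset hTcl hp
  obtain ⟨k, hk, hkp⟩ := hpmem
  exact hk hkp

/-- Every sequence in the σ-boundary of the fiber has a σ-cluster point. -/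
lemma exists_sigma_cluster [MetricSpace X] [tY : TopologicalSpace Y] [T1Space Y]
    (f : X → Y) (y : Y)
    (hcl : ∀ s : Set X,
      @IsClosed X (sigmaTop UniformSpace.toTopologicalSpace tY f) s → IsClosed (f '' s))
    (hY : FunctionallyHausdorff Y)
    (U : ℕ → Set Y) (hUo : ∀ i, IsOpen (U i)) (hUy : ∀ i, y ∈ U i)
    (hUm : ∀ i j, i ≤ j → U j ⊆ U i)
    (hUacc : ∀ w : ℕ → Y, (∀ i, w i ∈ U i) → Function.Injective w →
      ∃ p : Y, p ∈ closure (Set.range w \ {p}))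
    (x : ℕ → X) (hxf : ∀ n, f (x n) = y)
    (hxcl : ∀ n, x n ∈
      @closure X (sigmaTop UniformSpace.toTopologicalSpace tY f) (f ⁻¹' {y})ᶜ) :
    ∃ q : X,
      @MapClusterPt X (sigmaTop UniformSpace.toTopologicalSpace tY f) ℕ q atTop x := by
  classical
  by_contra hno
  push_neg at hno
  by_cases hcase : ∃ r₀ : X, MapClusterPt r₀ atTop x
  · obtain ⟨r₀, hr₀⟩ := hcase
    obtain ⟨φ, hφ, hφt⟩ := metric_cluster_subseq hr₀
    by_cases hfy : f r₀ = y
    · -- then r₀ is a σ-cluster point of x, contradiction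
      refine absurd ?_ (hno r₀)
      have h1 : Tendsto (x ∘ φ) atTop
          (@nhds X ((UniformSpace.toTopologicalSpace : TopologicalSpace X) ⊓
            TopologicalSpace.induced f tY) r₀) := by
        rw [nhds_inf (t₁ := (UniformSpace.toTopologicalSpace : TopologicalSpace X))
          (t₂ := TopologicalSpace.induced f tY), tendsto_inf]
        constructor
        · exact hφt
        · rw [nhds_induced f r₀, hfy, tendsto_comap_iff]
          have h2 : (f ∘ (x ∘ φ)) = fun _ => y := funext fun k => hxf (φ k)
          rw [h2]
          exact tendsto_const_nhds
      exact Hmcp_comp hφ.tendsto_atTop (Hmcp_of_tendsto h1)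
    · obtain ⟨g, hgc, hgI, hgy0, hgr1⟩ := hY y (f r₀) fun h => hfy h.symm
      refine aux f y hcl U hUo hUy hUm hUacc (x ∘ φ) (fun n => hxf (φ n))
        (fun n => hxcl (φ n)) g hgc hgy0 ?_
      intro r hr
      have hreq : r = r₀ := by
        have h2 : NeBot (𝓝 r ⊓ 𝓝 r₀) := NeBot.mono hr (inf_le_inf_left _ hφt)
        exact eq_of_nhds_neBot h2
      rw [hreq]
      exact hgr1
  · push_neg at hcase
    refine aux f y hcl U hUo hUy hUm hUacc x hxf hxcl (fun _ => 0) continuous_const rfl ?_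
    intro r hr
    exact absurd hr (hcase r)

end Aux

/-- Let `f : X → Y` be a closed continuous surjection, `X` submetrizable, `Y` functionally
Hausdorff and `y` a q-point. Then for every coarser metrizable topology `τ` on `X`, the
`σ(τ,f)`-boundary of the fiber `f⁻¹(y)` is compact in `(X, σ(τ,f))`. -/
theorem frontier_fiber_isCompact {X : Type u} {Y : Type v}
    [tX : TopologicalSpace X] [tY : TopologicalSpace Y] [T1Space X] [T1Space Y]
    (hX : Submetrizable X) (hY : FunctionallyHausdorff Y)
    (f : X → Y) (hf : Continuous f) (hsurj : Function.Surjective f)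
    (hclosed : IsClosedMap f) (y : Y) (hy : IsQPoint y) :
    ∀ τ : TopologicalSpace X, tX ≤ τ → @TopologicalSpace.MetrizableSpace X τ →
      @IsCompact X (sigmaTop τ tY f) (@frontier X (sigmaTop τ tY f) (f ⁻¹' {y})) := by
  intro τ hτ hmet
  obtain ⟨m, hm⟩ : ∃ m : MetricSpace X, m.toUniformSpace.toTopologicalSpace = τ :=
    ⟨@TopologicalSpace.metrizableSpaceMetric X τ hmet, rfl⟩
  subst hm
  letI : MetricSpace X := m
  set B : Set X := @frontier X (sigT tY f) (f ⁻¹' {y}) with hBdef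
  have hστ : sigT tY f ≤ (UniformSpace.toTopologicalSpace : TopologicalSpace X) :=
    inf_le_left
  have htσ : tX ≤ sigT tY f := le_inf hτ (continuous_iff_le_induced.mp hf)
  have hcl : ∀ s : Set X, @IsClosed X (sigT tY f) s → IsClosed (f '' s) := fun s hs =>
    hclosed s (Hclosed_mono htσ hs)
  -- decreasing q-point neighborhoods
  obtain ⟨U0, hU0, hU0acc⟩ := hy
  set U : ℕ → Set Y := fun n => ⋂ k ∈ Finset.range (n + 1), U0 k with hUdef
  have hUo : ∀ i, IsOpen (U i) := fun i =>
    isOpen_biInter_finset fun k _ => (hU0 k).1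
  have hUy : ∀ i, y ∈ U i := fun i => Set.mem_iInter₂.2 fun k _ => (hU0 k).2
  have hUm : ∀ i j, i ≤ j → U j ⊆ U i := by
    intro i j hij v hv
    refine Set.mem_iInter₂.2 fun k hk => ?_
    refine Set.mem_iInter₂.1 hv k ?_
    have := Finset.mem_range.1 hk
    exact Finset.mem_range.2 (by omega)
  have hUsub : ∀ i, U i ⊆ U0 i := fun i v hv =>
    Set.mem_iInter₂.1 hv i (Finset.mem_range.2 (by omega))
  have hUacc : ∀ w : ℕ → Y, (∀ i, w i ∈ U i) → Function.Injective w →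
      ∃ p : Y, p ∈ closure (Set.range w \ {p}) := fun w hw hwinj =>
    hU0acc w (fun i => hUsub i (hw i)) hwinj
  -- facts about B
  have hfσ : @Continuous X Y (sigT tY f) tY f := continuous_iff_le_induced.mpr inf_le_right
  have hFc : @IsClosed X (sigT tY f) (f ⁻¹' {y}) := Hpreimage_closed hfσ isClosed_singleton
  have hBF : B ⊆ f ⁻¹' {y} := by
    rw [hBdef]
    refine (Hfrontier_sub (t := sigT tY f)).trans ?_
    rw [Hclosure_eq hFc]
  have hBf : ∀ b ∈ B, f b = y := fun b hb => hBF hb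
  have hBcl2 : ∀ b ∈ B, b ∈ @closure X (sigT tY f) (f ⁻¹' {y})ᶜ := by
    intro b hb
    have hsplit := Hfrontier_eq (t := sigT tY f) (s := (f ⁻¹' {y} : Set X))
    rw [hBdef, hsplit] at hb
    exact hb.2
  have hBclosed : @IsClosed X (sigT tY f) B := by
    rw [hBdef]; exact Hisclosed_frontier
  -- B is sequentially compact for the metric topology
  have hseq : @IsSeqCompact X (UniformSpace.toTopologicalSpace : TopologicalSpace X) B := by
    intro x hx
    by_cases hrep : ∃ a, ∃ᶠ n in atTop, x n = a
    · obtain ⟨a, ha⟩ := hrep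
      obtain ⟨φ, hφ, hφa⟩ := extraction_of_frequently_atTop ha
      refine ⟨a, ?_, φ, hφ, ?_⟩
      · have := hx (φ 0); rwa [hφa 0] at this
      · have h1 : (x ∘ φ) = fun _ => a := funext hφa
        rw [h1]
        exact Htendsto_const
    · push_neg at hrep
      -- extract an injective subsequence
      have hstep : ∀ s : Finset ℕ, (∀ a ∈ s, True) →
          ∃ b, True ∧ ∀ a ∈ s, a < b ∧ x a ≠ x b := by
        intro s _
        have hev : ∀ᶠ n in atTop, ∀ a ∈ s, x n ≠ x a := by
          rw [eventually_all_finset]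
          intro a _
          exact hrep (x a)
        obtain ⟨b, hb1, hb2⟩ := (hev.and (Filter.eventually_gt_atTop (s.sup id))).exists
        exact ⟨b, trivial, fun a ha =>
          ⟨lt_of_le_of_lt (Finset.le_sup (f := id) ha) hb2, fun h => hb1 a ha h.symm⟩⟩
      obtain ⟨φ, -, hφR⟩ := exists_seq_of_forall_finset_exists (fun _ => True)
        (fun a b => a < b ∧ x a ≠ x b) hstep
      have hφmono : StrictMono φ := fun a b h => (hφR a b h).1
      obtain ⟨q, hq⟩ := exists_sigma_cluster f y hcl hY U hUo hUy hUm hUacc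
        (x ∘ φ) (fun n => hBf _ (hx (φ n))) (fun n => hBcl2 _ (hx (φ n)))
      have hqB : q ∈ B := by
        have h1 : q ∈ @closure X (sigT tY f) B := by
          refine Hclosure_nhds.2 fun N hN => ?_
          obtain ⟨k, hk⟩ := (Hfreq hq hN).exists
          exact ⟨x (φ k), hk, hx (φ k)⟩
        rwa [Hclosure_eq hBclosed] at h1
      have hqT : @MapClusterPt X (UniformSpace.toTopologicalSpace : TopologicalSpace X) ℕ q atTop (x ∘ φ) :=
        NeBot.mono hq (inf_le_inf_right _ (_root_.nhds_mono hστ))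
      obtain ⟨ψ, hψ, hψt⟩ := metric_cluster_subseq hqT
      exact ⟨q, hqB, φ ∘ ψ, hφmono.comp hψ, hψt⟩
  have hKT : @IsCompact X (UniformSpace.toTopologicalSpace : TopologicalSpace X) B :=
    @IsSeqCompact.isCompact X UniformSpace.toTopologicalSpace _ B hseq
  -- transfer compactness from τ to σ using that the two subspace topologies agree on B
  have hind : TopologicalSpace.induced ((↑) : B → X) (sigT tY f)
      = TopologicalSpace.induced ((↑) : B → X)
        (UniformSpace.toTopologicalSpace : TopologicalSpace X) := by
    have hσeq : sigT tY f = (UniformSpace.toTopologicalSpace : TopologicalSpace X) ⊓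
        TopologicalSpace.induced f tY := rfl
    rw [hσeq, induced_inf, induced_compose]
    have hconst : (f ∘ ((↑) : B → X)) = fun _ => y := funext fun b => hBf _ b.2
    rw [hconst, induced_const, inf_top_eq]
  have hinst : (@instTopologicalSpaceSubtype X (fun a => a ∈ B) (sigT tY f))
      = (@instTopologicalSpaceSubtype X (fun a => a ∈ B)
          (UniformSpace.toTopologicalSpace : TopologicalSpace X)) := hind
  have h1 := (@isCompact_iff_compactSpace X
    (UniformSpace.toTopologicalSpace : TopologicalSpace X) B).1 hKT
  rw [← hinst] at h1
  exact (@isCompact_iff_compactSpace X (sigT tY f) B).2 h1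
end

section
/- If a topological space has a countable almost network, then it is Lindelöf. -/
universe u

/-- `N` is an almost network for `X` if for every `x` and every open neighbourhood `U` of `x`
there is `F ∈ N` with `x ∈ F` and `F \ U` finite. -/
def AlmostNetwork {X : Type u} [TopologicalSpace X] (N : Set (Set X)) : Prop :=
  ∀ x : X, ∀ U : Set X, IsOpen U → x ∈ U → ∃ F ∈ N, x ∈ F ∧ (F \ U).Finite

/-- A space with a countable almost network is Lindelöf. -/
theorem lindelof_of_countable_almostNetwork {X : Type u} [TopologicalSpace X]
    (N : Set (Set X)) (hN : N.Countable) (hnet : AlmostNetwork N) :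
    LindelofSpace X := by
  constructor
  rw [isLindelof_iff_countable_subcover]
  intro ι U hU hcov
  classical
  have hx : ∀ x : X, ∃ i, x ∈ U i := fun x => Set.mem_iUnion.mp (hcov (Set.mem_univ x))
  choose ix hix using hx
  rcases isEmpty_or_nonempty ι with hι | hι
  · refine ⟨∅, Set.countable_empty, fun x _ => (hι.false (ix x)).elim⟩
  have hP : ∀ F : Set X, (∃ i, (F \ U i).Finite) → ∃ i, (F \ U i).Finite := fun _ h => h
  choose! iF hiF using hP
  refine ⟨⋃ F ∈ {F ∈ N | ∃ i, (F \ U i).Finite},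
    insert (iF F) (ix '' (F \ U (iF F))), ?_, ?_⟩
  · refine Set.Countable.biUnion ((hN.mono (Set.sep_subset _ _))) ?_
    intro F hF
    exact (((hiF F hF.2).image ix).insert _).countable
  · intro x _
    obtain ⟨F, hFN, hxF, hfin⟩ := hnet x (U (ix x)) (hU _) (hix x)
    have hPF : ∃ i, (F \ U i).Finite := ⟨ix x, hfin⟩
    have hFmem : F ∈ {F ∈ N | ∃ i, (F \ U i).Finite} := ⟨hFN, hPF⟩
    by_cases hxU : x ∈ U (iF F)
    · exact Set.mem_biUnion (Set.mem_biUnion hFmem (Set.mem_insert _ _)) hxU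
    · have : ix x ∈ insert (iF F) (ix '' (F \ U (iF F))) :=
        Set.mem_insert_of_mem _ ⟨x, ⟨hxF, hxU⟩, rfl⟩
      exact Set.mem_biUnion (Set.mem_biUnion hFmem this) (hix x)
end

section
/- If a countably compact space Y is the image of a submetrizable space X under a closed continuous surjection, then Y is compact. -/
universe u v

/-- `Y` is countably compact: every countable open cover has a finite subcover. -/
def CountablyCompactSpace' (Y : Type v) [TopologicalSpace Y] : Prop :=
  ∀ U : ℕ → Set Y, (∀ n, IsOpen (U n)) → (⋃ n, U n) = Set.univ →
    ∃ s : Finset ℕ, (⋃ n ∈ s, U n) = Set.univ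

lemma aux_metric_closed {α : Type*} [MetricSpace α] (B : Set α)
    (h : ∀ z ∉ B, ∃ ε, 0 < ε ∧ ∀ b ∈ B, ε ≤ dist z b) : IsClosed B := by
  refine isClosed_of_closure_subset fun z hz => ?_
  by_contra hzB
  obtain ⟨ε, hε, hb⟩ := h z hzB
  obtain ⟨b, hbB, hlt⟩ := Metric.mem_closure_iff.mp hz ε hε
  exact absurd (hb b hbB) (not_le.mpr hlt)

lemma submetrizable_dist {X : Type u} [t : TopologicalSpace X] (hX : Submetrizable X) :
    ∃ d : X → X → ℝ, (∀ x, d x x = 0) ∧ (∀ x y, d x y = d y x) ∧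
      (∀ x y z, d x z ≤ d x y + d y z) ∧ (∀ x y, x ≠ y → 0 < d x y) ∧
      (∀ B : Set X, (∀ z ∉ B, ∃ ε, 0 < ε ∧ ∀ b ∈ B, ε ≤ d z b) → IsClosed B) := by
  obtain ⟨σ, hle, hm⟩ := hX
  obtain ⟨m, hmeq⟩ : ∃ m : MetricSpace X, m.toUniformSpace.toTopologicalSpace = σ :=
    ⟨@TopologicalSpace.metrizableSpaceMetric X σ hm, rfl⟩
  refine ⟨@dist X m.toPseudoMetricSpace.toDist,
    fun x => @dist_self X m.toPseudoMetricSpace x,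
    fun x y => @dist_comm X m.toPseudoMetricSpace x y,
    fun x y z => @dist_triangle X m.toPseudoMetricSpace x y z,
    fun x y hxy => (@dist_pos X m x y).mpr hxy,
    fun B hB => ?_⟩
  have h1 : @IsClosed X m.toUniformSpace.toTopologicalSpace B := @aux_metric_closed X m B hB
  rw [hmeq] at h1
  exact h1.mono hle

lemma exists_seq {α : Type*} (P : ℕ → α → Prop) (Q : α → α → Prop)
    (h : ∀ (G : Finset α) (n : ℕ), ∃ a, P n a ∧ ∀ b ∈ G, Q b a) :
    ∃ g : ℕ → α, (∀ n, P n (g n)) ∧ ∀ m n, m < n → Q (g m) (g n) := by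
  classical
  let st : ℕ → Finset α := fun n =>
    Nat.rec ∅ (fun k acc => insert (Classical.choose (h acc k)) acc) n
  let g : ℕ → α := fun n => Classical.choose (h (st n) n)
  have hst : ∀ n, st (n + 1) = insert (g n) (st n) := fun n => rfl
  have hmono : Monotone st := monotone_nat_of_le_succ fun n => by
    rw [hst]; exact Finset.subset_insert _ _
  refine ⟨g, fun n => (Classical.choose_spec (h (st n) n)).1, fun m n hmn => ?_⟩
  have h1 : g m ∈ st n := by
    have : g m ∈ st (m + 1) := by rw [hst]; exact Finset.mem_insert_self _ _
    exact hmono (Nat.succ_le_of_lt hmn) this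
  exact (Classical.choose_spec (h (st n) n)).2 _ h1

lemma countCompact_no_closed_discrete {Y : Type v} [TopologicalSpace Y]
    (hY : CountablyCompactSpace' Y) (b : ℕ → Y) (hb : Function.Injective b)
    (hcl : ∀ J : Set ℕ, IsClosed (b '' J)) : False := by
  have hcov : (⋃ n, (b '' {m | n < m})ᶜ) = Set.univ := by
    ext y
    simp only [Set.mem_iUnion, Set.mem_compl_iff, Set.mem_univ, iff_true]
    by_cases hy : ∃ k, b k = y
    · obtain ⟨k, hk⟩ := hy
      refine ⟨k, fun hmem => ?_⟩
      obtain ⟨m, hm, hmy⟩ := hmem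
      have hmk : m = k := hb (hmy.trans hk.symm)
      simp only [Set.mem_setOf_eq] at hm
      omega
    · exact ⟨0, fun hmem => hy ⟨hmem.choose, hmem.choose_spec.2⟩⟩
  obtain ⟨s, hs⟩ := hY (fun n => (b '' {m | n < m})ᶜ)
    (fun n => (hcl _).isOpen_compl) hcov
  · have hmem : b (s.sup id + 1) ∈ ⋃ n ∈ s, (b '' {m | n < m})ᶜ := by
      rw [hs]; exact Set.mem_univ _
    simp only [Set.mem_iUnion, Set.mem_compl_iff] at hmem
    obtain ⟨n, hn, hbn⟩ := hmem
    refine hbn ⟨s.sup id + 1, ?_, rfl⟩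
    have h := Finset.le_sup (f := id) hn
    simp only [id] at h
    exact Set.mem_setOf.mpr (Nat.lt_succ_of_le h)

lemma head_bound {X : Type u} (d : X → X → ℝ) (z : X) (x : ℕ → X)
    (hpos : ∀ m, x m ≠ z → 0 < d z (x m)) (M : ℕ) :
    ∃ δ, 0 < δ ∧ ∀ m < M, x m ≠ z → δ ≤ d z (x m) := by
  induction M with
  | zero => exact ⟨1, one_pos, fun m hm => absurd hm (Nat.not_lt_zero m)⟩
  | succ k ih =>
    obtain ⟨δ, hδ, hδle⟩ := ih
    by_cases hxk : x k ≠ z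
    · refine ⟨min δ (d z (x k)), lt_min hδ (hpos k hxk), fun m hm hmz => ?_⟩
      rcases Nat.lt_succ_iff_lt_or_eq.mp hm with hm' | rfl
      · exact le_trans (min_le_left _ _) (hδle m hm' hmz)
      · exact min_le_right _ _
    · refine ⟨δ, hδ, fun m hm hmz => ?_⟩
      rcases Nat.lt_succ_iff_lt_or_eq.mp hm with hm' | rfl
      · exact hδle m hm' hmz
      · exact absurd hmz hxk

lemma seq_limit_closed_aux {X : Type u} [TopologicalSpace X] (d : X → X → ℝ)
    (hsymm : ∀ x y, d x y = d y x) (htri : ∀ x y z, d x z ≤ d x y + d y z)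
    (hpos : ∀ x y, x ≠ y → 0 < d x y)
    (hcl : ∀ B : Set X, (∀ z ∉ B, ∃ ε, 0 < ε ∧ ∀ b ∈ B, ε ≤ d z b) → IsClosed B)
    (x : ℕ → X) (xl : X) (hconv : ∀ ε > 0, ∃ N, ∀ n ≥ N, d xl (x n) < ε)
    (J : Set ℕ) : IsClosed (x '' J ∪ {xl}) := by
  apply hcl
  intro z hz
  have hzx : z ≠ xl := fun h => hz (Set.mem_union_right _ (by simp [h]))
  have hδpos : 0 < d z xl := hpos _ _ hzx
  obtain ⟨N, hN⟩ := hconv (d z xl / 2) (by linarith)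
  obtain ⟨δ₂, hδ₂, hδ₂le⟩ := head_bound d z x
    (fun m hm => hpos _ _ (Ne.symm hm)) N
  refine ⟨min (d z xl / 2) δ₂, lt_min (by linarith) hδ₂, fun b hb => ?_⟩
  rcases hb with ⟨n, hnJ, rfl⟩ | hb
  · have hxnz : x n ≠ z := fun h => hz (Set.mem_union_left _ ⟨n, hnJ, h⟩)
    by_cases hn : n < N
    · exact le_trans (min_le_right _ _) (hδ₂le n hn hxnz)
    · have h1 : d xl (x n) < d z xl / 2 := hN n (Nat.le_of_not_lt hn)
      have h2 : d z xl ≤ d z (x n) + d (x n) xl := htri _ _ _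
      rw [hsymm (x n) xl] at h2
      calc min (d z xl / 2) δ₂ ≤ d z xl / 2 := min_le_left _ _
        _ ≤ d z (x n) := by linarith
  · simp only [Set.mem_singleton_iff] at hb
    subst hb
    calc min (d z b / 2) δ₂ ≤ d z b / 2 := min_le_left _ _
      _ ≤ d z b := by linarith

/-- A countably compact closed continuous image of a submetrizable space is compact. -/
theorem compact_of_countablyCompact_closed_image {X : Type u} {Y : Type v}
    [TopologicalSpace X] [TopologicalSpace Y] [T1Space X] [T1Space Y]
    (hX : Submetrizable X) (hY : CountablyCompactSpace' Y)
    (f : X → Y) (hf : Continuous f) (hsurj : Function.Surjective f)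
    (hclosed : IsClosedMap f) :
    CompactSpace Y := by
  classical
  rcases isEmpty_or_nonempty Y with hYe | hYne
  · infer_instance
  obtain ⟨d, hself, hsymm, htri, hpos, hcl⟩ := submetrizable_dist hX
  set s : Y → X := Function.surjInv hsurj with hsdef
  have hfs : ∀ y, f (s y) = y := fun y => Function.surjInv_eq hsurj y
  have LB : ∀ x : ℕ → X, Function.Injective (f ∘ x) →
      (∀ z, ∃ ε, 0 < ε ∧ ∀ m n, d z (x m) < ε → d z (x n) < ε → m = n) → False := by
    intro x hinj hsep
    refine countCompact_no_closed_discrete hY (f ∘ x) hinj fun J => ?_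
    rw [Set.image_comp]
    apply hclosed
    apply hcl
    intro z hz
    obtain ⟨ε, hε, huniq⟩ := hsep z
    by_cases hex : ∃ n ∈ J, d z (x n) < ε
    · obtain ⟨n₀, hn₀J, hn₀⟩ := hex
      have hxz : x n₀ ≠ z := fun h => hz ⟨n₀, hn₀J, h⟩
      refine ⟨min ε (d z (x n₀)), lt_min hε (hpos _ _ (Ne.symm hxz)), ?_⟩
      rintro b ⟨k, hkJ, rfl⟩
      by_contra hlt
      push_neg at hlt
      have h1 : d z (x k) < ε := lt_of_lt_of_le hlt (min_le_left _ _)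
      have hk0 : k = n₀ := huniq k n₀ h1 hn₀
      rw [hk0] at hlt
      exact absurd hlt (not_lt.mpr (min_le_right _ _))
    · push_neg at hex
      refine ⟨ε, hε, ?_⟩
      rintro b ⟨k, hkJ, rfl⟩
      exact hex k hkJ
  constructor
  apply isCompact_of_finite_subcover
  intro ι U hUo hUc
  by_contra hfin
  push_neg at hfin
  set C : Finset ι → Set Y := fun t => (⋃ i ∈ t, U i)ᶜ with hCdef
  have hCcl : ∀ t, IsClosed (C t) := fun t => (isOpen_biUnion fun i _ => hUo i).isClosed_compl
  have hCne : ∀ t, (C t).Nonempty := by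
    intro t
    obtain ⟨y, _, hy2⟩ := Set.not_subset.mp (hfin t)
    exact ⟨y, hy2⟩
  have hsubC : ∀ (a b : Finset ι), a ⊆ b → C b ⊆ C a := by
    intro a b hab
    apply Set.compl_subset_compl.mpr
    exact Set.iUnion₂_mono' fun i hi => ⟨i, hab hi, subset_rfl⟩
  have hdir : Directed (· ≥ ·) fun t : Finset ι => Filter.principal (C t) := by
    intro t₁ t₂
    exact ⟨t₁ ∪ t₂, Filter.principal_mono.mpr (hsubC _ _ Finset.subset_union_left),
      Filter.principal_mono.mpr (hsubC _ _ Finset.subset_union_right)⟩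
  haveI hnb : (⨅ t : Finset ι, Filter.principal (C t)).NeBot :=
    Filter.iInf_neBot_of_directed hdir fun t => Filter.principal_neBot_iff.mpr (hCne t)
  set UF : Ultrafilter Y := Ultrafilter.of (⨅ t : Finset ι, Filter.principal (C t)) with hUFdef
  have hUFC : ∀ t, C t ∈ UF := fun t =>
    Ultrafilter.of_le _ (Filter.mem_iInf_of_mem t (Filter.mem_principal_self _))
  have hfinUF : ∀ G : Set Y, G.Finite → Gᶜ ∈ UF := by
    intro G hG
    by_contra hGc
    have hGm : G ∈ UF := by
      by_contra hGm
      exact hGc ((Ultrafilter.compl_mem_iff_notMem).mpr hGm)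
    obtain ⟨y₀, _, hpure⟩ := Ultrafilter.eq_pure_of_finite_mem hG hGm
    obtain ⟨i, hi⟩ := Set.mem_iUnion.mp (hUc (Set.mem_univ y₀))
    have hy₀ : y₀ ∈ C {i} := by
      have hmem := hUFC {i}
      rw [hpure] at hmem
      exact (Ultrafilter.mem_pure).mp hmem
    simp only [hCdef, Set.mem_compl_iff, Set.mem_iUnion] at hy₀
    exact hy₀ ⟨i, Finset.mem_singleton_self i, hi⟩
  have hpick : ∀ A ∈ UF, ∀ G : Finset Y, ∃ y, y ∈ A ∧ y ∉ G := by
    intro A hA G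
    have hmem : A ∩ (↑G : Set Y)ᶜ ∈ UF := Filter.inter_mem hA (hfinUF _ G.finite_toSet)
    obtain ⟨y, hy1, hy2⟩ := Ultrafilter.nonempty_of_mem hmem
    exact ⟨y, hy1, by simpa using hy2⟩
  have hTB : ∀ ε : ℝ, 0 < ε → ∃ F : Finset X, ∀ y : Y, ∃ cp ∈ F, d cp (s y) < ε := by
    intro ε hε
    by_contra hTBn
    push_neg at hTBn
    obtain ⟨g, -, hgQ⟩ := exists_seq (fun _ _ => True)
      (fun y₁ y₂ => ε ≤ d (s y₁) (s y₂))
      (fun G n => by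
        obtain ⟨y, hy⟩ := hTBn (G.image s)
        exact ⟨y, trivial, fun b hb => hy (s b) (Finset.mem_image_of_mem s hb)⟩)
    have hginj : Function.Injective g := by
      intro m n hmn
      by_contra hne
      rcases lt_or_gt_of_ne hne with h | h
      · have h1 := hgQ m n h
        rw [hmn, hself] at h1
        linarith
      · have h1 := hgQ n m h
        rw [hmn, hself] at h1
        linarith
    apply LB (fun n => s (g n))
    · have hcomp : (f ∘ fun n => s (g n)) = g := funext fun n => hfs (g n)
      rw [hcomp]; exact hginj
    · intro z
      refine ⟨ε / 2, by linarith, fun m n hm hn => ?_⟩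
      by_contra hmn
      rcases lt_or_gt_of_ne hmn with h | h
      · have h1 := hgQ m n h
        have h2 := htri (s (g m)) z (s (g n))
        rw [hsymm (s (g m)) z] at h2
        linarith
      · have h1 := hgQ n m h
        have h2 := htri (s (g n)) z (s (g m))
        rw [hsymm (s (g n)) z] at h2
        linarith
  have hBall : ∀ n : ℕ, ∃ cp : X, {y : Y | d cp (s y) < 1 / ((n : ℝ) + 1)} ∈ UF := by
    intro n
    obtain ⟨F, hF⟩ := hTB (1 / ((n : ℝ) + 1)) (by positivity)
    by_contra hno
    push_neg at hno
    have hint : (⋂ cp ∈ F, {y : Y | d cp (s y) < 1 / ((n : ℝ) + 1)}ᶜ) ∈ UF :=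
      (Filter.biInter_finset_mem F).mpr fun cp _ =>
        (Ultrafilter.compl_mem_iff_notMem).mpr (hno cp)
    obtain ⟨y, hy⟩ := Ultrafilter.nonempty_of_mem hint
    obtain ⟨cp, hcpF, hcp⟩ := hF y
    exact (Set.mem_iInter₂.mp hy cp hcpF) hcp
  choose c hc using hBall
  set W : ℕ → Set Y := fun n =>
    ⋂ m ∈ Finset.range (n + 1), {y : Y | d (c m) (s y) < 1 / ((m : ℝ) + 1)} with hWdef
  have hWUF : ∀ n, W n ∈ UF := fun n =>
    (Filter.biInter_finset_mem _).mpr fun m _ => hc m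
  have hWd : ∀ n y, y ∈ W n → ∀ m, m ≤ n → d (c m) (s y) < 1 / ((m : ℝ) + 1) := by
    intro n y hy m hm
    exact Set.mem_iInter₂.mp hy m (Finset.mem_range.mpr (Nat.lt_succ_of_le hm))
  have hWest : ∀ (m n : ℕ) (ya yb : Y), m ≤ n → ya ∈ W m → yb ∈ W n →
      d (s ya) (s yb) < 2 / ((m : ℝ) + 1) := by
    intro m n ya yb hmn hya hyb
    have h1 := hWd m ya hya m le_rfl
    have h2 := hWd n yb hyb m hmn
    have h3 := htri (s ya) (c m) (s yb)
    rw [hsymm (s ya) (c m)] at h3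
    have h5 : (2 : ℝ) / ((m : ℝ) + 1) = 1 / ((m : ℝ) + 1) + 1 / ((m : ℝ) + 1) := by ring
    rw [h5]
    linarith
  obtain ⟨y₁, hy₁W, hy₁ne⟩ := exists_seq (fun n y => y ∈ W n) (fun a b => a ≠ b)
    (fun G n => by
      obtain ⟨y, hy1, hy2⟩ := hpick (W n) (hWUF n) G
      exact ⟨y, hy1, fun b hb hby => hy2 (hby ▸ hb)⟩)
  have hy₁inj : Function.Injective y₁ := fun m n hmn => by
    by_contra hne
    rcases lt_or_gt_of_ne hne with h | h
    · exact hy₁ne m n h hmn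
    · exact hy₁ne n m h hmn.symm
  have hxinj1 : Function.Injective (fun n => s (y₁ n)) := fun m n h => by
    apply hy₁inj
    have h2 := congrArg f h
    simpa [hfs] using h2
  have hlim : ∃ xl : X, ∀ ε > 0, ∃ N, ∀ n ≥ N, d xl (s (y₁ n)) < ε := by
    by_contra hno
    push_neg at hno
    apply LB (fun n => s (y₁ n))
    · have hcomp : (f ∘ fun n => s (y₁ n)) = y₁ := funext fun n => hfs (y₁ n)
      rw [hcomp]; exact hy₁inj
    · intro z
      by_contra hzno
      push_neg at hzno
      obtain ⟨ε₀, hε₀, hN⟩ := hno z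
      obtain ⟨N₁, hN₁⟩ := exists_nat_one_div_lt (show (0:ℝ) < ε₀/4 by linarith)
      obtain ⟨δ₂, hδ₂, hδ₂le⟩ := head_bound d z (fun n => s (y₁ n))
        (fun m hm => hpos _ _ (Ne.symm hm)) N₁
      obtain ⟨m, n, hm, hn, hmn⟩ := hzno (min (ε₀/2) δ₂) (lt_min (by linarith) hδ₂)
      have hone : ∃ k, d z (s (y₁ k)) < min (ε₀/2) δ₂ ∧ s (y₁ k) ≠ z := by
        by_cases hzm : s (y₁ m) = z
        · exact ⟨n, hn, fun h => hmn (hxinj1 (show (fun j => s (y₁ j)) m = (fun j => s (y₁ j)) n from hzm.trans h.symm))⟩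
        · exact ⟨m, hm, hzm⟩
      obtain ⟨k, hk1, hk2⟩ := hone
      have hkN : N₁ ≤ k := by
        by_contra hlt
        push_neg at hlt
        have hb1 := hδ₂le k hlt hk2
        have hb2 := lt_of_lt_of_le hk1 (min_le_right _ _)
        linarith
      obtain ⟨n', hn', hge⟩ := hN k
      have hkn' : d (s (y₁ k)) (s (y₁ n')) < 2 / ((k:ℝ) + 1) :=
        hWest k n' (y₁ k) (y₁ n') hn' (hy₁W k) (hy₁W n')
      have htr := htri z (s (y₁ k)) (s (y₁ n'))
      have hcast : ((N₁:ℝ) + 1) ≤ ((k:ℝ) + 1) := by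
        have : (N₁:ℝ) ≤ (k:ℝ) := by exact_mod_cast hkN
        linarith
      have hmono : (2:ℝ)/((k:ℝ)+1) ≤ 2/((N₁:ℝ)+1) := by
        apply div_le_div_of_nonneg_left (by norm_num) (by positivity) hcast
      have heq : (2:ℝ)/((N₁:ℝ)+1) = 2*(1/((N₁:ℝ)+1)) := by ring
      have hk1' : d z (s (y₁ k)) < ε₀/2 := lt_of_lt_of_le hk1 (min_le_left _ _)
      linarith [hN₁]
  obtain ⟨xl, hxl⟩ := hlim
  obtain ⟨i₀, hi₀⟩ := Set.mem_iUnion.mp (hUc (Set.mem_univ (f xl)))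
  obtain ⟨y₂, hy₂P, hy₂ne⟩ := exists_seq (fun n y => y ∈ W n ∧ y ∈ C {i₀}) (fun a b => a ≠ b)
    (fun G n => by
      have hmem : W n ∩ C {i₀} ∈ UF := Filter.inter_mem (hWUF n) (hUFC {i₀})
      obtain ⟨y, hy1, hy2⟩ := hpick _ hmem G
      exact ⟨y, ⟨hy1.1, hy1.2⟩, fun b hb hby => hy2 (hby ▸ hb)⟩)
  have hy₂inj : Function.Injective y₂ := fun m n hmn => by
    by_contra hne
    rcases lt_or_gt_of_ne hne with h | h
    · exact hy₂ne m n h hmn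
    · exact hy₂ne n m h hmn.symm
  have hconv2 : ∀ ε > 0, ∃ N, ∀ n ≥ N, d xl (s (y₂ n)) < ε := by
    intro ε hε
    obtain ⟨N₂, hN₂⟩ := exists_nat_one_div_lt (show (0:ℝ) < ε/4 by linarith)
    obtain ⟨N₃, hN₃⟩ := hxl (ε/2) (by linarith)
    refine ⟨max N₂ N₃, fun n hn => ?_⟩
    set m := max N₂ N₃ with hmdef
    have h1 : d xl (s (y₁ m)) < ε/2 := hN₃ m (le_max_right _ _)
    have h2 : d (s (y₁ m)) (s (y₂ n)) < 2 / ((m:ℝ)+1) :=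
      hWest m n (y₁ m) (y₂ n) hn (hy₁W m) (hy₂P n).1
    have htr := htri xl (s (y₁ m)) (s (y₂ n))
    have hcast : ((N₂:ℝ) + 1) ≤ ((m:ℝ) + 1) := by
      have : (N₂:ℝ) ≤ (m:ℝ) := by exact_mod_cast le_max_left N₂ N₃
      linarith
    have hmono : (2:ℝ)/((m:ℝ)+1) ≤ 2/((N₂:ℝ)+1) := by
      apply div_le_div_of_nonneg_left (by norm_num) (by positivity) hcast
    have heq : (2:ℝ)/((N₂:ℝ)+1) = 2*(1/((N₂:ℝ)+1)) := by ring
    linarith [hN₂]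
  have hfxl : f xl ∈ C {i₀} := by
    have hclC : IsClosed (C {i₀}) := hCcl {i₀}
    rw [← hclC.closure_eq]
    rw [mem_closure_iff]
    intro V hV hxV
    by_contra hVc
    have hnV : ∀ n, y₂ n ∉ V := fun n h => hVc ⟨y₂ n, h, (hy₂P n).2⟩
    refine countCompact_no_closed_discrete hY y₂ hy₂inj fun J => ?_
    have hQcl : IsClosed ((fun n => s (y₂ n)) '' J ∪ {xl}) :=
      seq_limit_closed_aux d hsymm htri hpos hcl _ xl (fun ε hε => hconv2 ε hε) J
    have hfQ := hclosed _ hQcl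
    have himg : f '' ((fun n => s (y₂ n)) '' J ∪ {xl}) = y₂ '' J ∪ {f xl} := by
      rw [Set.image_union, Set.image_singleton, ← Set.image_comp]
      congr 1
      have hcomp : (f ∘ fun n => s (y₂ n)) = y₂ := funext fun n => hfs (y₂ n)
      rw [hcomp]
    rw [himg] at hfQ
    refine isClosed_of_closure_subset fun w hw => ?_
    have hw2 : w ∈ y₂ '' J ∪ {f xl} :=
      hfQ.closure_subset ((closure_mono Set.subset_union_left) hw)
    rcases hw2 with hw2 | hw2
    · exact hw2
    · exfalso
      simp only [Set.mem_singleton_iff] at hw2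
      subst hw2
      obtain ⟨w', hw'1, hw'2⟩ := mem_closure_iff.mp hw V hV hxV
      obtain ⟨n, _, rfl⟩ := hw'2
      exact hnV n hw'1
  simp only [hCdef, Set.mem_compl_iff, Set.mem_iUnion] at hfxl
  exact hfxl ⟨i₀, Finset.mem_singleton_self i₀, hi₀⟩
end

section
/- Let X be a submetrizable space, Y a functionally Hausdorff, dense-in-itself space with countable pseudocharacter, and f : X → Y an open and closed continuous surjection. Then Y is submetrizable. -/
universe u v

/- Auxiliary material for the proof.

The mathematical core is the following "touch propagation" argument.  Let `φ : X → M` be a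
continuous injection into a metric space (coming from submetrizability of `X`), let
`f : X → Y` be an open-closed continuous surjection, and let `y ∈ Y` be a non-isolated point
whose singleton is Gδ, say `{y} = ⋂ V k` with `V k` open.

Suppose `p k = φ (x k)` is an `ε`-separated sequence with `f (x k) = y`.  Put
`N k = f(φ⁻¹(ball (p k) r))` (open neighbourhoods of `y`, where `r = ε/4`), and
`O k = V k ∩ N (k+1)`.  The "chunks" `C k = φ⁻¹(closedBall (p k) (3r/2)) ∩ f⁻¹((O k)ᶜ)` form a
locally finite family of closed sets (the balls are separated), so `⋃ C k` is closed, and its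
image under `f` is a closed set missing `y`.  On the complement `H` of this image — an open
neighbourhood of `y` — membership in `N k` forces membership in `O k ⊆ V k ∩ N (k+1)`.
Consequently any `z ∈ H ∩ N 0` with `z ≠ y` lies in every `N k`, hence in every `V k`, hence
`z = y`: contradiction with `y` being non-isolated.  This shows each fiber has totally bounded
metric shadow (`exists_fiber_net`).

A variant of the same argument, with the separated sequence replaced by a sequence of fiber
points converging (in `M`) to a point `φ x₀` with `f x₀ ≠ y`, shows that `φ x₀` cannot be in
the closure of the shadow of the fiber of `y` (`not_reach`); the union of chunks together with
`x₀` is closed in that case.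

Finally, `z ↦ min 1 (infDist · (φ '' f⁻¹ {z}))` is a continuous injection from `Y` into the
metric space of bounded continuous functions on `M`: continuity at `y` follows from closedness
of `f` (upper inclusion) together with openness of `f` and the finite fiber net (lower
inclusion), and injectivity follows from `not_reach`.  A continuous injection into a metric
space witnesses submetrizability via the induced topology. -/
namespace SubmetrizableAux

open Set Metric Topology

variable {X : Type u} {Y : Type v} {M : Type u}

/-- From a Gδ singleton, extract an ℕ-indexed system of open sets whose intersection is the
singleton. -/
lemma gdelta_system [TopologicalSpace Y] (y : Y) (h : IsGδ ({y} : Set Y)) :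
    ∃ V : ℕ → Set Y, (∀ k, IsOpen (V k)) ∧ (∀ k, y ∈ V k) ∧ ∀ z, (∀ k, z ∈ V k) → z = y := by
  obtain ⟨V, hVo, hV⟩ := isGδ_iff_eq_iInter_nat.mp h
  refine ⟨V, hVo, ?_, ?_⟩
  · intro k
    have : y ∈ ⋂ n, V n := by rw [← hV]; exact rfl
    exact mem_iInter.mp this k
  · intro z hz
    have : z ∈ ⋂ n, V n := mem_iInter.mpr hz
    rw [← hV] at this
    exact this

/-- The shared "touch propagation" engine: if `y` is non-isolated, `V` is a Gδ system for `y`,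
the `N k` are open neighbourhoods of `y`, and `H` is an open neighbourhood of `y` such that any
point of `H` belonging to `N k` necessarily belongs to `V k ∩ N (k+1)`, we get a
contradiction. -/
lemma engine [TopologicalSpace Y] {y : Y}
    (hdense : (nhdsWithin y ({y}ᶜ : Set Y)).NeBot)
    (V : ℕ → Set Y) (hVsep : ∀ z, (∀ k, z ∈ V k) → z = y)
    (N : ℕ → Set Y) (hNopen : ∀ k, IsOpen (N k)) (hNy : ∀ k, y ∈ N k)
    (H : Set Y) (hHopen : IsOpen H) (hHy : y ∈ H)
    (hkey : ∀ z ∈ H, ∀ k, z ∈ N k → z ∈ V k ∩ N (k + 1)) : False := by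
  have hmem : (H ∩ N 0) ∈ nhds y := ((hHopen.inter (hNopen 0)).mem_nhds ⟨hHy, hNy 0⟩)
  have hne : ((H ∩ N 0) ∩ ({y}ᶜ : Set Y)).Nonempty := by
    refine hdense.nonempty_of_mem ?_
    exact Filter.inter_mem (mem_nhdsWithin_of_mem_nhds hmem) self_mem_nhdsWithin
  obtain ⟨z, ⟨⟨hzH, hzN0⟩, hzne⟩⟩ := hne
  have hN : ∀ k, z ∈ N k := by
    intro k
    induction k with
    | zero => exact hzN0
    | succ n ih => exact (hkey z hzH n ih).2
  have hV : ∀ k, z ∈ V k := fun k => (hkey z hzH k (hN k)).1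
  exact hzne (hVsep z hV)

section WithMaps

variable [TopologicalSpace X] [TopologicalSpace Y] [MetricSpace M]

/-- A union of closed chunks sitting inside uniformly separated closed balls is closed. -/
lemma isClosed_iUnion_chunks (φ : X → M) (hφ : Continuous φ)
    (ε ρ : ℝ) (h2 : 2 * ρ < ε)
    (p : ℕ → M) (hsep : ∀ j k, j ≠ k → ε ≤ dist (p j) (p k))
    (S : ℕ → Set X) (hS : ∀ k, IsClosed (S k))
    (hsub : ∀ k, S k ⊆ φ ⁻¹' Metric.closedBall (p k) ρ) :
    IsClosed (⋃ k, S k) := by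
  have hδ : 0 < (ε - 2 * ρ) / 4 := by linarith
  have hLF : LocallyFinite S := by
    intro u
    refine ⟨φ ⁻¹' Metric.ball (φ u) ((ε - 2 * ρ) / 4),
      (Metric.isOpen_ball.preimage hφ).mem_nhds ?_, ?_⟩
    · simp only [mem_preimage, Metric.mem_ball, dist_self]
      exact hδ
    · have hss : {k | (S k ∩ φ ⁻¹' Metric.ball (φ u) ((ε - 2 * ρ) / 4)).Nonempty}.Subsingleton := by
        intro k hk j hj
        obtain ⟨a, haS, ha'⟩ := hk
        obtain ⟨b, hbS, hb'⟩ := hj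
        have hak : dist (φ a) (p k) ≤ ρ := by
          have := hsub k haS
          simpa only [mem_preimage, Metric.mem_closedBall] using this
        have hbj : dist (φ b) (p j) ≤ ρ := by
          have := hsub j hbS
          simpa only [mem_preimage, Metric.mem_closedBall] using this
        have hau : dist (φ a) (φ u) < (ε - 2 * ρ) / 4 := by
          simpa only [mem_preimage, Metric.mem_ball] using ha'
        have hbu : dist (φ b) (φ u) < (ε - 2 * ρ) / 4 := by
          simpa only [mem_preimage, Metric.mem_ball] using hb'
        by_contra hne
        have hεd := hsep k j hne
        have t1 : dist (p k) (p j) ≤ dist (p k) (φ a) + dist (φ a) (φ u) + dist (φ u) (p j) :=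
          dist_triangle4 _ _ _ _
        have t2 : dist (φ u) (p j) ≤ dist (φ u) (φ b) + dist (φ b) (p j) := dist_triangle _ _ _
        have e1 : dist (p k) (φ a) = dist (φ a) (p k) := dist_comm _ _
        have e2 : dist (φ u) (φ b) = dist (φ b) (φ u) := dist_comm _ _
        have : dist (p k) (p j) < ε := by
          rw [e1] at t1
          rw [e2] at t2
          linarith
        linarith
      exact hss.finite
  exact hLF.isClosed_iUnion hS

/-- A union of closed chunks converging (in position) to a single point `x₀`, together with
`x₀` itself, is closed. -/
lemma isClosed_iUnion_chunks_conv [T1Space X] (φ : X → M) (hφ : Continuous φ)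
    (hφi : Function.Injective φ) (x₀ : X)
    (S : ℕ → Set X) (hS : ∀ i, IsClosed (S i))
    (hsub : ∀ i, ∀ v ∈ S i, dist (φ v) (φ x₀) < (1/2 : ℝ) ^ i) :
    IsClosed ((⋃ i, S i) ∪ {x₀}) := by
  rw [← isOpen_compl_iff]
  rw [isOpen_iff_mem_nhds]
  intro u hu
  simp only [mem_compl_iff, mem_union, not_or, mem_singleton_iff] at hu
  obtain ⟨huS, hux⟩ := hu
  have hc : 0 < dist (φ u) (φ x₀) := dist_pos.mpr (fun h => hux (hφi h))
  obtain ⟨I, hI⟩ := exists_pow_lt_of_lt_one (by linarith : (0:ℝ) < dist (φ u) (φ x₀) / 2)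
    (by norm_num : (1/2 : ℝ) < 1)
  set W : Set X := φ ⁻¹' Metric.ball (φ u) (dist (φ u) (φ x₀) / 2) ∩
    (⋂ i ∈ Finset.range I, (S i)ᶜ) ∩ ({x₀}ᶜ : Set X) with hW
  have hWopen : IsOpen W := by
    refine ((Metric.isOpen_ball.preimage hφ).inter ?_).inter isClosed_singleton.isOpen_compl
    exact isOpen_biInter_finset (fun i _ => (hS i).isOpen_compl)
  have hWu : u ∈ W := by
    refine ⟨⟨?_, ?_⟩, hux⟩
    · simp only [mem_preimage, Metric.mem_ball, dist_self]
      linarith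
    · refine mem_iInter₂.mpr (fun i _ => ?_)
      exact fun h => huS (mem_iUnion.mpr ⟨i, h⟩)
  have hWsub : W ⊆ ((⋃ i, S i) ∪ {x₀})ᶜ := by
    intro v hv
    simp only [mem_compl_iff, mem_union, not_or, mem_singleton_iff]
    obtain ⟨⟨hv1, hv2⟩, hv3⟩ := hv
    refine ⟨?_, hv3⟩
    intro hvS
    obtain ⟨i, hvi⟩ := mem_iUnion.mp hvS
    rcases Nat.lt_or_ge i I with h | h
    · exact (mem_iInter₂.mp hv2 i (Finset.mem_range.mpr h)) hvi
    · have h1 : dist (φ v) (φ x₀) < (1/2 : ℝ) ^ i := hsub i v hvi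
      have h2 : ((1:ℝ)/2) ^ i ≤ (1/2 : ℝ) ^ I :=
        pow_le_pow_of_le_one (by norm_num) (by norm_num) h
      have h3 : dist (φ v) (φ u) < dist (φ u) (φ x₀) / 2 := by
        simpa only [mem_preimage, Metric.mem_ball, dist_comm] using hv1
      have := dist_triangle (φ u) (φ v) (φ x₀)
      have h4 : dist (φ v) (φ u) = dist (φ u) (φ v) := dist_comm _ _
      linarith
  exact Filter.mem_of_superset (hWopen.mem_nhds hWu) hWsub

/-- Total boundedness of the metric shadow of a fiber: there is a finite ε-net inside
the fiber. -/
lemma exists_fiber_net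
    (φ : X → M) (hφ : Continuous φ)
    (f : X → Y) (hf : Continuous f)
    (hopen : IsOpenMap f) (hclosed : IsClosedMap f)
    (y : Y)
    (hdense : (nhdsWithin y ({y}ᶜ : Set Y)).NeBot)
    (hpsi : IsGδ ({y} : Set Y))
    (ε : ℝ) (hε : 0 < ε) :
    ∃ s : Finset X, (∀ x ∈ s, f x = y) ∧
      ∀ u, f u = y → ∃ x ∈ s, dist (φ u) (φ x) < ε := by
  classical
  by_contra hcon
  push_neg at hcon
  -- Build an ε-separated sequence of fiber points.
  have hstep : ∀ s : Finset X, ∃ u, f u = y ∧ ∀ x ∈ s, f x = y → ε ≤ dist (φ u) (φ x) := by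
    intro s
    obtain ⟨u, hu, hd⟩ := hcon (s.filter (fun x => f x = y))
      (fun x hx => (Finset.mem_filter.mp hx).2)
    exact ⟨u, hu, fun x hx hfx => hd x (Finset.mem_filter.mpr ⟨hx, hfx⟩)⟩
  choose g hg1 hg2 using hstep
  let G : ℕ → Finset X := fun n => Nat.rec ∅ (fun _ s => insert (g s) s) n
  have hGsucc : ∀ n, G (n + 1) = insert (g (G n)) (G n) := fun n => rfl
  have hGmono : ∀ j k, j ≤ k → G j ⊆ G k := by
    intro j k hjk
    induction k with
    | zero => simp_all
    | succ n ih =>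
      rcases Nat.lt_or_ge j (n+1) with h | h
      · have := ih (Nat.lt_succ_iff.mp h)
        rw [hGsucc]
        exact this.trans (Finset.subset_insert _ _)
      · have : j = n + 1 := le_antisymm hjk h
        subst this
        exact subset_rfl
  set pt : ℕ → X := fun n => g (G n) with hpt
  have hpfib : ∀ n, f (pt n) = y := fun n => hg1 _
  have hpmem : ∀ n, pt n ∈ G (n + 1) := by
    intro n; rw [hGsucc]; exact Finset.mem_insert_self _ _
  have hsep : ∀ j k, j < k → ε ≤ dist (φ (pt k)) (φ (pt j)) := by
    intro j k hjk
    exact hg2 (G k) (pt j) (hGmono (j+1) k hjk (hpmem j)) (hpfib j)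
  have hsep' : ∀ j k, j ≠ k → ε ≤ dist (φ (pt j)) (φ (pt k)) := by
    intro j k hjk
    rcases Nat.lt_or_ge j k with h | h
    · rw [dist_comm]; exact hsep j k h
    · exact hsep k j (lt_of_le_of_ne h (Ne.symm hjk))
  -- Main argument.
  obtain ⟨V, hVo, hVy, hVsep⟩ := gdelta_system y hpsi
  set r : ℝ := ε / 4 with hrdef
  have hr : 0 < r := by rw [hrdef]; linarith
  set N : ℕ → Set Y := fun k => f '' (φ ⁻¹' Metric.ball (φ (pt k)) r) with hNdef
  have hNo : ∀ k, IsOpen (N k) := fun k =>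
    hopen _ (Metric.isOpen_ball.preimage hφ)
  have hNy : ∀ k, y ∈ N k := by
    intro k
    refine ⟨pt k, ?_, hpfib k⟩
    simp only [mem_preimage, Metric.mem_ball, dist_self]
    exact hr
  set O : ℕ → Set Y := fun k => V k ∩ N (k + 1) with hOdef
  have hOy : ∀ k, y ∈ O k := fun k => ⟨hVy k, hNy (k+1)⟩
  have hOo : ∀ k, IsOpen (O k) := fun k => (hVo k).inter (hNo (k+1))
  set S : ℕ → Set X := fun k =>
    φ ⁻¹' Metric.closedBall (φ (pt k)) (3 * r / 2) ∩ f ⁻¹' (O k)ᶜ with hSdef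
  have hSc : ∀ k, IsClosed (S k) := fun k =>
    ((Metric.isClosed_closedBall).preimage hφ).inter (((hOo k).isClosed_compl).preimage hf)
  have hA : IsClosed (⋃ k, S k) := by
    refine isClosed_iUnion_chunks φ hφ ε (3 * r / 2) (by rw [hrdef]; linarith)
      (fun k => φ (pt k)) hsep' S hSc (fun k => inter_subset_left)
  have hfA : IsClosed (f '' ⋃ k, S k) := hclosed _ hA
  have hyA : y ∉ f '' (⋃ k, S k) := by
    rintro ⟨u, hu, hfu⟩
    obtain ⟨k, huk⟩ := mem_iUnion.mp hu
    have : f u ∈ O k := by rw [hfu]; exact hOy k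
    exact huk.2 this
  refine engine hdense V hVsep N hNo hNy ((f '' ⋃ k, S k)ᶜ) hfA.isOpen_compl hyA ?_
  intro z hz k hzN
  obtain ⟨u, hub, hfu⟩ := hzN
  by_contra hzO
  refine hz ⟨u, mem_iUnion.mpr ⟨k, ⟨?_, ?_⟩⟩, hfu⟩
  · simp only [mem_preimage, Metric.mem_ball] at hub
    simp only [mem_preimage, Metric.mem_closedBall]
    linarith
  · simp only [mem_preimage, mem_compl_iff]
    rw [hfu]
    exact hzO

/-- No point of another fiber is in the closure of the metric shadow of the fiber of `y`. -/
lemma not_reach [T1Space X]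
    (φ : X → M) (hφ : Continuous φ) (hφi : Function.Injective φ)
    (f : X → Y) (hf : Continuous f)
    (hopen : IsOpenMap f) (hclosed : IsClosedMap f)
    (y : Y)
    (hdense : (nhdsWithin y ({y}ᶜ : Set Y)).NeBot)
    (hpsi : IsGδ ({y} : Set Y))
    (x₀ : X) (hx₀ : f x₀ ≠ y)
    (happ : ∀ δ : ℝ, 0 < δ → ∃ u, f u = y ∧ dist (φ u) (φ x₀) < δ) : False := by
  classical
  have happ' : ∀ i : ℕ, ∃ u, f u = y ∧
      0 < dist (φ u) (φ x₀) ∧ dist (φ u) (φ x₀) < (1/2 : ℝ) ^ i / 2 := by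
    intro i
    obtain ⟨u, hu1, hu2⟩ := happ ((1/2 : ℝ) ^ i / 2) (by positivity)
    refine ⟨u, hu1, ?_, hu2⟩
    refine dist_pos.mpr (fun h => hx₀ ?_)
    rw [← hφi h, hu1]
  choose xs hxs1 hxs2 hxs3 using happ'
  obtain ⟨V, hVo, hVy, hVsep⟩ := gdelta_system y hpsi
  set ρ : ℕ → ℝ := fun i => dist (φ (xs i)) (φ x₀) with hρdef
  set N : ℕ → Set Y := fun i => f '' (φ ⁻¹' Metric.ball (φ (xs i)) (ρ i)) with hNdef
  have hNo : ∀ i, IsOpen (N i) := fun i => hopen _ (Metric.isOpen_ball.preimage hφ)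
  have hNy : ∀ i, y ∈ N i := by
    intro i
    refine ⟨xs i, ?_, hxs1 i⟩
    simp only [mem_preimage, Metric.mem_ball, dist_self]
    exact hxs2 i
  set O : ℕ → Set Y := fun i => V i ∩ N (i + 1) with hOdef
  have hOy : ∀ i, y ∈ O i := fun i => ⟨hVy i, hNy (i+1)⟩
  have hOo : ∀ i, IsOpen (O i) := fun i => (hVo i).inter (hNo (i+1))
  set S : ℕ → Set X := fun i =>
    φ ⁻¹' Metric.closedBall (φ (xs i)) (ρ i) ∩ f ⁻¹' (O i)ᶜ with hSdef
  have hSc : ∀ i, IsClosed (S i) := fun i =>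
    ((Metric.isClosed_closedBall).preimage hφ).inter (((hOo i).isClosed_compl).preimage hf)
  have hB : IsClosed ((⋃ i, S i) ∪ {x₀}) := by
    refine isClosed_iUnion_chunks_conv φ hφ hφi x₀ S hSc ?_
    intro i v hv
    have h1 : dist (φ v) (φ (xs i)) ≤ ρ i := by
      have := hv.1
      simpa only [mem_preimage, Metric.mem_closedBall] using this
    have h2 : ρ i < (1/2 : ℝ) ^ i / 2 := hxs3 i
    have := dist_triangle (φ v) (φ (xs i)) (φ x₀)
    have hρ : dist (φ (xs i)) (φ x₀) = ρ i := rfl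
    linarith [this, hρ ▸ h2]
  have hfB : IsClosed (f '' ((⋃ i, S i) ∪ {x₀})) := hclosed _ hB
  have hyB : y ∉ f '' ((⋃ i, S i) ∪ {x₀}) := by
    rintro ⟨u, hu, hfu⟩
    rcases hu with hu | hu
    · obtain ⟨i, hui⟩ := mem_iUnion.mp hu
      have : f u ∈ O i := by rw [hfu]; exact hOy i
      exact hui.2 this
    · rw [mem_singleton_iff] at hu
      subst hu
      exact hx₀ hfu
  refine engine hdense V hVsep N hNo hNy _ hfB.isOpen_compl hyB ?_
  intro z hz i hzN
  obtain ⟨u, hub, hfu⟩ := hzN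
  by_contra hzO
  refine hz ⟨u, Or.inl (mem_iUnion.mpr ⟨i, ⟨?_, ?_⟩⟩), hfu⟩
  · simp only [mem_preimage, Metric.mem_ball] at hub
    simp only [mem_preimage, Metric.mem_closedBall]
    linarith
  · simp only [mem_preimage, mem_compl_iff]
    rw [hfu]
    exact hzO

/-- Upper semicontinuity of fibers (elementwise form), from closedness of `f`. -/
lemma upper_lemma (φ : X → M) (hφ : Continuous φ)
    (f : X → Y) (hclosed : IsClosedMap f)
    (y : Y) (ε : ℝ) (hε : 0 < ε) :
    ∃ W : Set Y, IsOpen W ∧ y ∈ W ∧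
      ∀ z ∈ W, ∀ u, f u = z → ∃ u', f u' = y ∧ dist (φ u) (φ u') < ε := by
  classical
  set U : Set X := ⋃ u' ∈ f ⁻¹' ({y} : Set Y), φ ⁻¹' Metric.ball (φ u') ε with hU
  have hUopen : IsOpen U := by
    refine isOpen_biUnion (fun u' _ => Metric.isOpen_ball.preimage hφ)
  have hfib : f ⁻¹' ({y} : Set Y) ⊆ U := by
    intro u' hu'
    refine mem_biUnion hu' ?_
    simp only [mem_preimage, Metric.mem_ball, dist_self]
    exact hε
  refine ⟨(f '' Uᶜ)ᶜ, (hclosed _ hUopen.isClosed_compl).isOpen_compl, ?_, ?_⟩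
  · intro hy
    obtain ⟨u, hu, hfu⟩ := hy
    exact hu (hfib (by simpa [mem_preimage] using hfu))
  · intro z hz u hu
    have huU : u ∈ U := by
      by_contra h
      exact hz ⟨u, h, hu⟩
    obtain ⟨u', hu', hball⟩ := mem_iUnion₂.mp huU
    refine ⟨u', by simpa using hu', ?_⟩
    simpa only [mem_preimage, Metric.mem_ball] using hball

/-- Lower semicontinuity of fibers (elementwise form), from openness of `f` and the fiber net. -/
lemma lower_lemma (φ : X → M) (hφ : Continuous φ)
    (f : X → Y) (hopen : IsOpenMap f)
    (y : Y) (ε : ℝ) (hε : 0 < ε)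
    (s : Finset X) (hs : ∀ x ∈ s, f x = y)
    (hnet : ∀ u, f u = y → ∃ x ∈ s, dist (φ u) (φ x) < ε / 2) :
    ∃ W : Set Y, IsOpen W ∧ y ∈ W ∧
      ∀ z ∈ W, ∀ u', f u' = y → ∃ u, f u = z ∧ dist (φ u') (φ u) < ε := by
  classical
  refine ⟨⋂ x ∈ s, f '' (φ ⁻¹' Metric.ball (φ x) (ε / 2)), ?_, ?_, ?_⟩
  · exact isOpen_biInter_finset (fun x _ => hopen _ (Metric.isOpen_ball.preimage hφ))
  · refine mem_iInter₂.mpr (fun x hx => ?_)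
    refine ⟨x, ?_, hs x hx⟩
    simp only [mem_preimage, Metric.mem_ball, dist_self]
    linarith
  · intro z hz u' hu'
    obtain ⟨x, hx, hdx⟩ := hnet u' hu'
    obtain ⟨u, hub, hfu⟩ := mem_iInter₂.mp hz x hx
    refine ⟨u, hfu, ?_⟩
    simp only [mem_preimage, Metric.mem_ball] at hub
    have := dist_triangle (φ u') (φ x) (φ u)
    have e : dist (φ x) (φ u) = dist (φ u) (φ x) := dist_comm _ _
    linarith

end WithMaps

/-- `min 1 ·` is 1-Lipschitz on ℝ. -/
lemma dist_min_one_le (a b : ℝ) : dist (min 1 a) (min 1 b) ≤ dist a b := by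
  rw [Real.dist_eq, Real.dist_eq]
  have h1 := le_abs_self (a - b)
  have h2 := neg_abs_le (a - b)
  rcases min_cases (1:ℝ) a with ⟨e1, c1⟩ | ⟨e1, c1⟩ <;>
    rcases min_cases (1:ℝ) b with ⟨e2, c2⟩ | ⟨e2, c2⟩ <;>
      rw [e1, e2] <;> refine abs_le.mpr ⟨by linarith, by linarith⟩

/-- If every point of `A` is `δ`-approximated in `B`, then `infDist p B ≤ infDist p A + δ`. -/
lemma infDist_le_add_of_approx {M : Type u} [MetricSpace M] {A B : Set M} (hA : A.Nonempty)
    (p : M) (δ : ℝ) (h : ∀ a ∈ A, ∃ b ∈ B, dist a b < δ) :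
    Metric.infDist p B ≤ Metric.infDist p A + δ := by
  by_contra h'
  push_neg at h'
  have hγ : Metric.infDist p A <
      Metric.infDist p A + (Metric.infDist p B - (Metric.infDist p A + δ)) := by linarith
  obtain ⟨a, haA, hda⟩ := (Metric.infDist_lt_iff hA).mp hγ
  obtain ⟨b, hbB, hdb⟩ := h a haA
  have hb1 : Metric.infDist p B ≤ dist p b := Metric.infDist_le_dist_of_mem hbB
  have hb2 : dist p b ≤ dist p a + dist a b := dist_triangle _ _ _
  linarith

/-- The distance-type function associated with a fiber. -/
noncomputable def distFun {X : Type u} {Y : Type v} {M : Type u}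
    [MetricSpace M] (φ : X → M) (f : X → Y) (z : Y) : BoundedContinuousFunction M ℝ :=
  BoundedContinuousFunction.ofNormedAddCommGroup
    (fun p => min 1 (Metric.infDist p (φ '' (f ⁻¹' {z}))))
    (continuous_const.min (Metric.continuous_infDist_pt _)) 1
    (fun p => by
      rw [Real.norm_eq_abs, abs_of_nonneg (le_min zero_le_one Metric.infDist_nonneg)]
      exact min_le_left _ _)

lemma distFun_apply {X : Type u} {Y : Type v} {M : Type u}
    [MetricSpace M] (φ : X → M) (f : X → Y) (z : Y) (p : M) :
    distFun φ f z p = min 1 (Metric.infDist p (φ '' (f ⁻¹' {z}))) := rfl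

/-- A continuous injection into a metric space witnesses submetrizability. -/
lemma submetrizable_of_contInjective {Y : Type v} {Z : Type w} [tY : TopologicalSpace Y]
    [MetricSpace Z] (h : Y → Z) (hcont : Continuous h) (hinj : Function.Injective h) :
    Submetrizable Y := by
  refine ⟨TopologicalSpace.induced h inferInstance, continuous_iff_le_induced.mp hcont, ?_⟩
  letI : TopologicalSpace Y := TopologicalSpace.induced h (inferInstance : TopologicalSpace Z)
  have hemb : Topology.IsEmbedding h := ⟨⟨rfl⟩, hinj⟩
  exact hemb.metrizableSpace

/-- Main auxiliary lemma: the conclusion of the theorem, given a continuous injection of `X`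
into a metric space. -/
lemma main_aux {X : Type u} {Y : Type v} {M : Type u}
    [tX : TopologicalSpace X] [tY : TopologicalSpace Y] [mM : MetricSpace M] [t1X : T1Space X]
    (φ : X → M) (hφc : Continuous φ) (hφi : Function.Injective φ)
    (hdense : ∀ y : Y, (nhdsWithin y {y}ᶜ).NeBot)
    (hpsi : ∀ y : Y, IsGδ ({y} : Set Y))
    (f : X → Y) (hf : Continuous f) (hsurj : Function.Surjective f)
    (hopen : IsOpenMap f) (hclosed : IsClosedMap f) :
    Submetrizable Y := by
  classical
  have hAne : ∀ z : Y, (φ '' (f ⁻¹' {z})).Nonempty := by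
    intro z
    obtain ⟨u, hu⟩ := hsurj z
    exact ⟨φ u, mem_image_of_mem _ (by simp [hu])⟩
  set h : Y → BoundedContinuousFunction M ℝ := fun z => distFun φ f z with hhdef
  have hcont : Continuous h := by
    rw [continuous_iff_continuousAt]
    intro y
    rw [ContinuousAt, Metric.tendsto_nhds]
    intro ε hε
    obtain ⟨W₁, hW₁o, hW₁y, hW₁⟩ := upper_lemma φ hφc f hclosed y (ε/4) (by linarith)
    obtain ⟨s, hs, hnet⟩ :=
      exists_fiber_net φ hφc f hf hopen hclosed y (hdense y) (hpsi y) (ε/8) (by linarith)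
    have hnet' : ∀ u, f u = y → ∃ x ∈ s, dist (φ u) (φ x) < (ε/4) / 2 := by
      intro u hu
      obtain ⟨x, hx, hd⟩ := hnet u hu
      exact ⟨x, hx, by linarith⟩
    obtain ⟨W₂, hW₂o, hW₂y, hW₂⟩ :=
      lower_lemma φ hφc f hopen y (ε/4) (by linarith) s hs hnet'
    filter_upwards [((hW₁o.inter hW₂o).mem_nhds ⟨hW₁y, hW₂y⟩ : W₁ ∩ W₂ ∈ nhds y)] with z hz
    have key : dist (h z) (h y) ≤ ε/2 := by
      rw [hhdef]
      refine (BoundedContinuousFunction.dist_le (by linarith)).mpr ?_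
      intro p
      rw [distFun_apply, distFun_apply]
      have h1 : Metric.infDist p (φ '' (f ⁻¹' {y})) ≤
          Metric.infDist p (φ '' (f ⁻¹' {z})) + ε/4 := by
        refine infDist_le_add_of_approx (hAne z) p (ε/4) ?_
        rintro a ⟨u, hu, rfl⟩
        obtain ⟨u', hu', hd⟩ := hW₁ z hz.1 u (by simpa using hu)
        exact ⟨φ u', mem_image_of_mem _ (by simp [hu']), hd⟩
      have h2 : Metric.infDist p (φ '' (f ⁻¹' {z})) ≤
          Metric.infDist p (φ '' (f ⁻¹' {y})) + ε/4 := by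
        refine infDist_le_add_of_approx (hAne y) p (ε/4) ?_
        rintro a ⟨u', hu', rfl⟩
        obtain ⟨u, hu, hd⟩ := hW₂ z hz.2 u' (by simpa using hu')
        exact ⟨φ u, mem_image_of_mem _ (by simp [hu]), hd⟩
      have h3 := dist_min_one_le (Metric.infDist p (φ '' (f ⁻¹' {z})))
        (Metric.infDist p (φ '' (f ⁻¹' {y})))
      have h4 : dist (Metric.infDist p (φ '' (f ⁻¹' {z})))
          (Metric.infDist p (φ '' (f ⁻¹' {y}))) ≤ ε/4 := by
        rw [Real.dist_eq]
        refine abs_le.mpr ⟨by linarith, by linarith⟩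
      linarith
    linarith [key]
  have hinj : Function.Injective h := by
    intro y₁ y₂ he
    by_contra hne
    obtain ⟨u₂, hu₂⟩ := hsurj y₂
    have h0 : Metric.infDist (φ u₂) (φ '' (f ⁻¹' {y₂})) = 0 :=
      Metric.infDist_zero_of_mem (mem_image_of_mem _ (by simp [hu₂]))
    have he' : min 1 (Metric.infDist (φ u₂) (φ '' (f ⁻¹' {y₁}))) = 0 := by
      have hc := DFunLike.congr_fun he (φ u₂)
      rw [hhdef] at hc
      simp only [distFun_apply] at hc
      rw [hc, h0]
      simp
    have hz : Metric.infDist (φ u₂) (φ '' (f ⁻¹' {y₁})) = 0 := by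
      by_contra h'
      have hpos : 0 < Metric.infDist (φ u₂) (φ '' (f ⁻¹' {y₁})) :=
        lt_of_le_of_ne Metric.infDist_nonneg (Ne.symm h')
      have hmin : (0:ℝ) < min 1 (Metric.infDist (φ u₂) (φ '' (f ⁻¹' {y₁}))) :=
        lt_min one_pos hpos
      rw [he'] at hmin
      exact lt_irrefl _ hmin
    refine not_reach φ hφc hφi f hf hopen hclosed y₁ (hdense y₁) (hpsi y₁) u₂
      (by rw [hu₂]; exact Ne.symm hne) ?_
    intro δ hδ
    have hlt : Metric.infDist (φ u₂) (φ '' (f ⁻¹' {y₁})) < δ := by rw [hz]; exact hδ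
    obtain ⟨a, ha, hda⟩ := (Metric.infDist_lt_iff (hAne y₁)).mp hlt
    obtain ⟨u, hu, rfl⟩ := ha
    exact ⟨u, by simpa using hu, by rw [dist_comm]; exact hda⟩
  exact submetrizable_of_contInjective h hcont hinj

/-- A metric copy of a type. -/
def MCopy (X : Type u) : Type u := X

end SubmetrizableAux

open SubmetrizableAux in
/-- If `X` is submetrizable, `Y` is functionally Hausdorff, dense-in-itself and has countable
pseudocharacter, and `f : X → Y` is an open-closed continuous surjection, then `Y` is
submetrizable. -/
theorem submetrizable_of_openClosed_image {X : Type u} {Y : Type v}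
    [TopologicalSpace X] [TopologicalSpace Y] [T1Space X] [T1Space Y]
    (hX : Submetrizable X) (hY : FunctionallyHausdorff Y)
    (hdense : ∀ y : Y, (nhdsWithin y {y}ᶜ).NeBot)
    (hpsi : ∀ y : Y, IsGδ ({y} : Set Y))
    (f : X → Y) (hf : Continuous f) (hsurj : Function.Surjective f)
    (hopen : IsOpenMap f) (hclosed : IsClosedMap f) :
    Submetrizable Y := by
  classical
  rename_i tX tY t1X t1Y
  obtain ⟨σ, hle, hmet⟩ := hX
  obtain ⟨m, hm⟩ : ∃ m : MetricSpace X, m.toUniformSpace.toTopologicalSpace = σ :=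
    ⟨@TopologicalSpace.metrizableSpaceMetric X σ hmet, rfl⟩
  letI mM : MetricSpace (MCopy X) := m
  have hφc : @Continuous X (MCopy X) tX _ id := by
    refine continuous_def.mpr (fun U hU => ?_)
    have hU' : σ.IsOpen U := by rw [← hm]; exact hU
    exact hle U hU'
  exact main_aux (tX := tX) (tY := tY) (mM := mM) (t1X := t1X)
    (id : X → MCopy X) hφc (fun a b hab => hab) hdense hpsi f hf hsurj hopen hclosed
end

section
/- Let X be submetrizable, Y functionally Hausdorff and dense-in-itself, and f : X → Y an open-closed continuous surjection. If every point of Y is the limit of a nontrivial convergent sequence in Y, then Y is submetrizable. -/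
universe u v

section Auxiliary

open Filter Topology Set Metric TopologicalSpace

universe w


theorem exists_seq_ne {Y : Type v} [TopologicalSpace Y] (y : Y)
    (h : ∃ x : ℕ → Y, Filter.Tendsto x Filter.atTop (nhds y) ∧
      ¬ ∃ a : Y, ∀ᶠ n in Filter.atTop, x n = a) :
    ∃ z : ℕ → Y, Filter.Tendsto z Filter.atTop (nhds y) ∧ ∀ n, z n ≠ y := by
  obtain ⟨x, hx, hnc⟩ := h
  set p : ℕ → Prop := fun n => x n ≠ y with hp
  have hinf : (setOf p).Infinite := by
    by_contra h
    apply hnc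
    refine ⟨y, ?_⟩
    have h' : (setOf p).Finite := Set.not_infinite.mp h
    have := h'.compl_mem_cofinite
    rw [Nat.cofinite_eq_atTop] at this
    exact Filter.eventually_iff_exists_mem.mpr ⟨_, this, fun n hn => not_not.mp hn⟩
  refine ⟨fun k => x (Nat.nth p k), ?_, fun k => Nat.nth_mem_of_infinite hinf k⟩
  exact hx.comp (Nat.nth_strictMono hinf).tendsto_atTop

/-- Key compactness lemma: the image in the metric copy of each fiber is compact. -/
theorem fiber_image_isCompact {X : Type u} {Y : Type v} {Z : Type w}
    [TopologicalSpace X] [TopologicalSpace Y] [MetricSpace Z]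
    [T1Space X]
    (e : X → Z) (he : Continuous e)
    (hseq : ∀ y : Y, ∃ x : ℕ → Y, Filter.Tendsto x Filter.atTop (nhds y) ∧
      ¬ ∃ a : Y, ∀ᶠ n in Filter.atTop, x n = a)
    (f : X → Y) (hopen : IsOpenMap f) (hclosed : IsClosedMap f)
    (y : Y) : IsCompact (e '' (f ⁻¹' {y})) := by
  apply IsSeqCompact.isCompact
  intro v hv
  choose u hu1 hu2 using hv
  have hfu : ∀ k, f (u k) = y := fun k => Set.mem_singleton_iff.mp (hu1 k)
  obtain ⟨z, hz, hzne⟩ := exists_seq_ne y (hseq y)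
  -- choose points a k close to u k mapping onto far terms of z
  have hsel : ∀ k : ℕ, ∃ (b : X) (n : ℕ), k ≤ n ∧
      dist (e b) (v k) < 1 / ((k : ℝ) + 1) ∧ f b = z n := by
    intro k
    have hO : IsOpen (e ⁻¹' Metric.ball (v k) (1 / ((k : ℝ) + 1))) :=
      he.isOpen_preimage _ Metric.isOpen_ball
    have hmem : u k ∈ e ⁻¹' Metric.ball (v k) (1 / ((k : ℝ) + 1)) := by
      simp only [Set.mem_preimage, Metric.mem_ball, hu2 k, dist_self]
      positivity
    have hyO : y ∈ f '' (e ⁻¹' Metric.ball (v k) (1 / ((k : ℝ) + 1))) :=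
      ⟨u k, hmem, hfu k⟩
    have hev := (hz.eventually ((hopen _ hO).mem_nhds hyO)).and
      (Filter.eventually_ge_atTop k)
    obtain ⟨n, hn1, hn2⟩ := hev.exists
    obtain ⟨b, hb1, hb2⟩ := hn1
    exact ⟨b, n, hn2, hb1, hb2⟩
  choose a ν hν hdista hfa using hsel
  -- closedness of f produces a point of the fiber in the closure of the range of a
  have hyc : y ∈ f '' closure (Set.range a) := by
    have hcl : IsClosed (f '' closure (Set.range a)) := hclosed _ isClosed_closure
    rw [← hcl.closure_eq]
    rw [mem_closure_iff_nhds]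
    intro V hV
    obtain ⟨N, hN⟩ := Filter.eventually_atTop.mp (hz.eventually hV)
    refine ⟨f (a N), ?_, Set.mem_image_of_mem f (subset_closure ⟨N, rfl⟩)⟩
    rw [hfa N]
    exact hN _ (hν N)
  obtain ⟨q, hqmem, hqf⟩ := hyc
  -- q is in the closure of every tail
  have htail : ∀ m, q ∈ closure (a '' Set.Ici m) := by
    intro m
    have hsplit : Set.range a ⊆ a '' Set.Iio m ∪ a '' Set.Ici m := by
      rintro _ ⟨k, rfl⟩
      rcases lt_or_ge k m with h | h
      · exact Or.inl ⟨k, h, rfl⟩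
      · exact Or.inr ⟨k, h, rfl⟩
    have hq := closure_mono hsplit hqmem
    rw [closure_union] at hq
    rcases hq with h | h
    · exfalso
      have hfin : (a '' Set.Iio m).Finite := (Set.finite_Iio m).image a
      rw [hfin.isClosed.closure_eq] at h
      obtain ⟨j, _, hj⟩ := h
      exact hzne (ν j) (by rw [← hfa j, hj, hqf])
    · exact h
  -- q gives a metric cluster point of v
  have hfreq : ∀ n : ℕ, ∃ᶠ k in Filter.atTop, dist (v k) (e q) < 1 / ((n : ℝ) + 1) := by
    intro n
    rw [Filter.frequently_atTop]
    intro m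
    have hε : (0 : ℝ) < 1 / ((n : ℝ) + 1) := by positivity
    obtain ⟨M, hM⟩ := exists_nat_one_div_lt (by positivity : (0:ℝ) < 1 / ((n : ℝ) + 1) / 2)
    set m' := max m M with hm'
    have hball : q ∈ e ⁻¹' Metric.ball (e q) (1 / ((n : ℝ) + 1) / 2) := by
      simp only [Set.mem_preimage, Metric.mem_ball, dist_self]
      positivity
    obtain ⟨w, hw1, hw2⟩ := (mem_closure_iff.mp (htail m')) _
      (he.isOpen_preimage _ Metric.isOpen_ball) hball
    obtain ⟨k, hk, rfl⟩ := hw2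
    have hk' : m' ≤ k := hk
    refine ⟨k, le_trans (le_max_left m M) hk', ?_⟩
    have h1 : dist (e (a k)) (e q) < 1 / ((n : ℝ) + 1) / 2 := hw1
    have h2 : dist (v k) (e (a k)) < 1 / ((k : ℝ) + 1) := by
      rw [dist_comm]; exact hdista k
    have h3 : (1 : ℝ) / ((k : ℝ) + 1) ≤ 1 / ((M : ℝ) + 1) := by
      apply one_div_le_one_div_of_le
      · positivity
      · have : (M : ℝ) ≤ (k : ℝ) := by
          exact_mod_cast le_trans (le_max_right m M) hk'
        linarith
    calc dist (v k) (e q) ≤ dist (v k) (e (a k)) + dist (e (a k)) (e q) := dist_triangle _ _ _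
      _ < 1 / ((n : ℝ) + 1) := by linarith
  obtain ⟨ψ, hψmono, hψ⟩ := Filter.extraction_forall_of_frequently hfreq
  refine ⟨e q, ⟨q, hqf, rfl⟩, ψ, hψmono, ?_⟩
  rw [tendsto_iff_dist_tendsto_zero]
  exact squeeze_zero (fun n => dist_nonneg) (fun n => (hψ n).le)
    tendsto_one_div_add_atTop_nhds_zero_nat

theorem aux_submetrizable {X : Type u} {Y : Type v} {Z : Type w}
    [TopologicalSpace X] [ty : TopologicalSpace Y] [MetricSpace Z]
    [T1Space X]
    (e : X → Z) (he : Continuous e) (hei : Function.Injective e)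
    (hseq : ∀ y : Y, ∃ x : ℕ → Y, Filter.Tendsto x Filter.atTop (nhds y) ∧
      ¬ ∃ a : Y, ∀ᶠ n in Filter.atTop, x n = a)
    (f : X → Y) (hsurj : Function.Surjective f)
    (hopen : IsOpenMap f) (hclosed : IsClosedMap f) :
    ∃ σ : TopologicalSpace Y, ty ≤ σ ∧
      @TopologicalSpace.MetrizableSpace Y σ := by
  set Q : Y → Set Z := fun y => e '' (f ⁻¹' {y}) with hQ
  have hQcomp : ∀ y, IsCompact (Q y) :=
    fiber_image_isCompact e he hseq f hopen hclosed
  have hQne : ∀ y, (Q y).Nonempty := by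
    intro y
    obtain ⟨x, hx⟩ := hsurj y
    exact ⟨e x, x, by simp [hx], rfl⟩
  set φ : Y → NonemptyCompacts Z := fun y => ⟨⟨Q y, hQcomp y⟩, hQne y⟩ with hφ
  have hφinj : Function.Injective φ := by
    intro y1 y2 h
    have hQeq : Q y1 = Q y2 := congrArg (fun t : NonemptyCompacts Z => (t : Set Z)) h
    obtain ⟨x, hx⟩ := hsurj y1
    have h1 : e x ∈ Q y1 := ⟨x, by simp [hx], rfl⟩
    rw [hQeq] at h1
    obtain ⟨x', hx'1, hx'2⟩ := h1
    rw [← hx, ← Set.mem_singleton_iff.mp hx'1, hei hx'2]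
  have hφcont : Continuous φ := by
    rw [continuous_iff_continuousAt]
    intro y
    rw [ContinuousAt, Metric.tendsto_nhds]
    intro ε hε
    set δ := ε / 3 with hδ
    have hδpos : 0 < δ := by positivity
    -- upper semicontinuity neighborhood
    set U := e ⁻¹' Metric.thickening δ (Q y) with hU
    have hUopen : IsOpen U := he.isOpen_preimage _ Metric.isOpen_thickening
    have hV1open : IsOpen (f '' Uᶜ)ᶜ := (hclosed _ hUopen.isClosed_compl).isOpen_compl
    have hyV1 : y ∈ (f '' Uᶜ)ᶜ := by
      rintro ⟨x, hx1, hx2⟩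
      exact hx1 (Metric.self_subset_thickening hδpos (Q y) ⟨x, by simp [hx2], rfl⟩)
    -- lower semicontinuity neighborhood via total boundedness
    obtain ⟨T, hTsub, hTfin, hTcov⟩ := (hQcomp y).elim_finite_subcover_image
      (fun c (_ : c ∈ Q y) => Metric.isOpen_ball)
      (fun b hb => Set.mem_iUnion₂.mpr ⟨b, hb, Metric.mem_ball_self hδpos⟩)
    set V2 := ⋂ c ∈ T, f '' (e ⁻¹' Metric.ball c δ) with hV2
    have hV2open : IsOpen V2 :=
      hTfin.isOpen_biInter fun c _ => hopen _ (he.isOpen_preimage _ Metric.isOpen_ball)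
    have hyV2 : y ∈ V2 := by
      refine Set.mem_iInter₂.mpr fun c hc => ?_
      obtain ⟨xc, hxc1, hxc2⟩ := hTsub hc
      refine ⟨xc, ?_, Set.mem_singleton_iff.mp hxc1⟩
      simp only [Set.mem_preimage, Metric.mem_ball, hxc2, dist_self]
      exact hδpos
    have hmem : (f '' Uᶜ)ᶜ ∩ V2 ∈ nhds y := (hV1open.inter hV2open).mem_nhds ⟨hyV1, hyV2⟩
    filter_upwards [hmem] with y' hy'
    obtain ⟨hy1, hy2⟩ := hy'
    have hHD : Metric.hausdorffDist (Q y') (Q y) ≤ 2 * δ := by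
      apply Metric.hausdorffDist_le_of_mem_dist (by positivity)
      · rintro _ ⟨x', hx'1, rfl⟩
        have hxU : x' ∈ U := by
          by_contra h
          exact hy1 ⟨x', h, hx'1⟩
        obtain ⟨b, hb1, hb2⟩ := Metric.mem_thickening_iff.mp hxU
        exact ⟨b, hb1, by linarith⟩
      · intro b hb
        obtain ⟨c, hc, hbc⟩ := Set.mem_iUnion₂.mp (hTcov hb)
        obtain ⟨x', hx'1, hx'2⟩ := Set.mem_iInter₂.mp hy2 c hc
        refine ⟨e x', ⟨x', by simp [hx'2], rfl⟩, ?_⟩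
        have h1 : dist b c < δ := Metric.mem_ball.mp hbc
        have h2 : dist (e x') c < δ := hx'1
        calc dist b (e x') ≤ dist b c + dist c (e x') := dist_triangle _ _ _
          _ ≤ 2 * δ := by rw [dist_comm c (e x')]; linarith
    have hde : dist (φ y') (φ y) = Metric.hausdorffDist (Q y') (Q y) := rfl
    rw [hde]
    calc Metric.hausdorffDist (Q y') (Q y) ≤ 2 * δ := hHD
      _ < ε := by rw [hδ]; linarith
  refine ⟨TopologicalSpace.induced φ UniformSpace.toTopologicalSpace,
    continuous_iff_le_induced.mp hφcont, ?_⟩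
  exact @Topology.IsEmbedding.metrizableSpace Y (NonemptyCompacts Z)
    (TopologicalSpace.induced φ UniformSpace.toTopologicalSpace) _ _ φ
    (@Topology.IsEmbedding.mk Y (NonemptyCompacts Z)
      (TopologicalSpace.induced φ UniformSpace.toTopologicalSpace) _ φ
      (@Topology.IsInducing.mk Y (NonemptyCompacts Z)
        (TopologicalSpace.induced φ UniformSpace.toTopologicalSpace) _ φ rfl) hφinj)

/-- A copy of a type, used to carry a second (metric) topology. -/
def SubmetrizableCopy (X : Type u) : Type u := X

theorem submetrizable_helper {X : Type u} {Y : Type v}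
    [tX : TopologicalSpace X] [tY : TopologicalSpace Y] [t1X : T1Space X] [t1Y : T1Space Y]
    (hX : Submetrizable X)
    (hseq : ∀ y : Y, ∃ x : ℕ → Y, Filter.Tendsto x Filter.atTop (nhds y) ∧
      ¬ ∃ a : Y, ∀ᶠ n in Filter.atTop, x n = a)
    (f : X → Y) (hsurj : Function.Surjective f)
    (hopen : IsOpenMap f) (hclosed : IsClosedMap f) :
    Submetrizable Y := by
  obtain ⟨σ, hle, hmet⟩ := hX
  obtain ⟨m, hm⟩ : ∃ m : MetricSpace X, m.toUniformSpace.toTopologicalSpace = σ :=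
    ⟨@TopologicalSpace.metrizableSpaceMetric X σ hmet, rfl⟩
  letI mZ : MetricSpace (SubmetrizableCopy X) := m
  let ec : X → SubmetrizableCopy X := fun x => x
  have he : @Continuous X (SubmetrizableCopy X) tX _ ec := by
    rw [continuous_def]
    intro U hU
    have hU' : IsOpen[m.toUniformSpace.toTopologicalSpace] U := hU
    rw [hm] at hU'
    exact TopologicalSpace.le_def.mp hle _ hU'
  have hei : Function.Injective ec := fun a b h => h
  exact @aux_submetrizable X Y (SubmetrizableCopy X) tX tY mZ t1X ec he hei hseq
    f hsurj hopen hclosed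

end Auxiliary

/-- If `X` is submetrizable, `Y` is functionally Hausdorff, dense-in-itself, every point of `Y`
is the limit of a nontrivial (not eventually constant) convergent sequence, and `f : X → Y` is
an open-closed continuous surjection, then `Y` is submetrizable. -/
theorem submetrizable_of_openClosed_image_sequences {X : Type u} {Y : Type v}
    [TopologicalSpace X] [TopologicalSpace Y] [T1Space X] [T1Space Y]
    (hX : Submetrizable X) (hY : FunctionallyHausdorff Y)
    (hdense : ∀ y : Y, (nhdsWithin y {y}ᶜ).NeBot)
    (hseq : ∀ y : Y, ∃ x : ℕ → Y, Filter.Tendsto x Filter.atTop (nhds y) ∧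
      ¬ ∃ a : Y, ∀ᶠ n in Filter.atTop, x n = a)
    (f : X → Y) (hf : Continuous f) (hsurj : Function.Surjective f)
    (hopen : IsOpenMap f) (hclosed : IsClosedMap f) :
    Submetrizable Y :=
  submetrizable_helper hX hseq f hsurj hopen hclosed
end

section
/- There exist a submetrizable space X, a regular, first-countable, non-submetrizable space Y, and a continuous surjection f : X → Y that is both open and closed. -/
universe u

open Set Filter Topology

section Iso
def isolify {α : Type*} (t : TopologicalSpace α) (A : Set α) : TopologicalSpace α where
  IsOpen O := ∀ p ∈ O, p ∉ A → O ∈ @nhds α t p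
  isOpen_univ := fun _ _ _ => Filter.univ_mem
  isOpen_inter := fun _ _ h₁ h₂ p hp hpA => Filter.inter_mem (h₁ p hp.1 hpA) (h₂ p hp.2 hpA)
  isOpen_sUnion := fun S hS p hp hpA => by
    obtain ⟨O, hO, hpO⟩ := hp
    exact Filter.mem_of_superset (hS O hO p hpO hpA) (Set.subset_sUnion_of_mem hO)

variable {α : Type*} [t : TopologicalSpace α] {A : Set α}

lemma isolify_le : isolify t A ≤ t := by
  intro O hO
  exact fun p hp _ => hO.mem_nhds hp

lemma isolify_isOpen {O : Set α} :
    @IsOpen α (isolify t A) O ↔ ∀ p ∈ O, p ∉ A → O ∈ 𝓝 p := Iff.rfl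

lemma isolify_nhds_of_mem {p : α} (hp : p ∈ A) : @nhds α (isolify t A) p = pure p := by
  refine le_antisymm (Filter.le_pure_iff.2 ?_) (@pure_le_nhds α (isolify t A) p)
  have hopen : @IsOpen α (isolify t A) {p} :=
    fun q hq hqA => absurd (Set.mem_singleton_iff.1 hq ▸ hp) hqA
  exact @IsOpen.mem_nhds α (isolify t A) p {p} hopen rfl

lemma isolify_nhds_of_not_mem {p : α} (hp : p ∉ A) :
    @nhds α (isolify t A) p = 𝓝 p := by
  refine le_antisymm (nhds_mono isolify_le) ?_
  intro s hs
  obtain ⟨O, hOs, hO, hpO⟩ := (@mem_nhds_iff α (isolify t A) p s).1 hs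
  exact Filter.mem_of_superset (hO p hpO hp) hOs
end Iso

noncomputable section Construction

abbrev UI : Set ℝ := Set.Icc 0 1
abbrev Xsp : Type := ℝ × ↥UI
abbrev Ysp : Type := {p : ℝ × Bool // Irrational p.1 ∨ p.2 = false}

def gY : Ysp → ℝ := fun p => p.1.1

def tY0 : TopologicalSpace Ysp := TopologicalSpace.induced gY inferInstance
def AY : Set Ysp := {p | Irrational (gY p)}
def tY : TopologicalSpace Ysp := isolify tY0 AY

def tX0 : TopologicalSpace Xsp := instTopologicalSpaceProd
def AX : Set Xsp := {p | Irrational p.1}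
def tX : TopologicalSpace Xsp := isolify tX0 AX

open Classical in
def fXY : Xsp → Ysp := fun p =>
  if h : Irrational p.1 ∧ Irrational (p.2 : ℝ) then ⟨(p.1, true), Or.inl h.1⟩
  else ⟨(p.1, false), Or.inr rfl⟩

@[simp] lemma gY_fXY (p : Xsp) : gY (fXY p) = p.1 := by
  unfold fXY; split <;> rfl

lemma fXY_of_not_irr {p : Xsp} (hp : ¬ Irrational p.1) :
    fXY p = ⟨(p.1, false), Or.inr rfl⟩ := by
  unfold fXY
  rw [dif_neg (fun h : Irrational p.1 ∧ Irrational (p.2 : ℝ) => hp h.1)]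

lemma Y_eq_of_fst_eq {y y' : Ysp} (h : gY y = gY y') (hr : ¬ Irrational (gY y)) : y = y' := by
  obtain ⟨⟨x, b⟩, hb⟩ := y; obtain ⟨⟨x', b'⟩, hb'⟩ := y'
  simp only [gY] at h hr
  subst h
  have hb2 : b = false := hb.resolve_left hr
  have hb'2 : b' = false := hb'.resolve_left hr
  subst hb2; subst hb'2; rfl

lemma nhdsY_rat {y : Ysp} (hy : ¬ Irrational (gY y)) :
    @nhds Ysp tY y = Filter.comap gY (nhds (gY y)) := by
  rw [tY, @isolify_nhds_of_not_mem Ysp tY0 AY y hy, tY0, nhds_induced]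

lemma nhdsY_irr {y : Ysp} (hy : Irrational (gY y)) :
    @nhds Ysp tY y = pure y :=
  @isolify_nhds_of_mem Ysp tY0 AY y hy

/-- Characterization of open sets of `tY`. -/
lemma isOpen_tY {O : Set Ysp} :
    @IsOpen Ysp tY O ↔ ∀ p ∈ O, ¬ Irrational (gY p) →
      ∃ ε > 0, ∀ q : Ysp, |gY q - gY p| < ε → q ∈ O := by
  rw [tY]
  constructor
  · intro h p hp hpr
    have h2 : O ∈ @nhds Ysp tY0 p := h p hp hpr
    rw [tY0, nhds_induced] at h2
    obtain ⟨E, hE, hsub⟩ := Filter.mem_comap.1 h2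
    obtain ⟨ε, hε, hball⟩ := Metric.mem_nhds_iff.1 hE
    refine ⟨ε, hε, fun q hq => hsub ?_⟩
    exact hball (by rwa [Metric.mem_ball, Real.dist_eq])
  · intro h p hp hpr
    obtain ⟨ε, hε, hsub⟩ := h p hp hpr
    rw [tY0, nhds_induced]
    refine Filter.mem_comap.2 ⟨Metric.ball (gY p) ε, Metric.ball_mem_nhds _ hε, fun q hq => ?_⟩
    exact hsub q (by rwa [Set.mem_preimage, Metric.mem_ball, Real.dist_eq] at hq)

/-- Characterization of open sets of `tX`. -/
lemma isOpen_tX {O : Set Xsp} :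
    @IsOpen Xsp tX O ↔ ∀ p ∈ O, ¬ Irrational p.1 →
      ∃ ε > 0, ∀ (x : ℝ) (u : ↥UI), |x - p.1| < ε → |(u : ℝ) - (p.2 : ℝ)| < ε → (x, u) ∈ O := by
  rw [tX]
  constructor
  · intro h p hp hpr
    have h2 : O ∈ @nhds Xsp tX0 p := h p hp hpr
    rw [tX0] at h2
    obtain ⟨ε, hε, hball⟩ := Metric.mem_nhds_iff.1 h2
    refine ⟨ε, hε, fun x u hx hu => hball ?_⟩
    rw [Metric.mem_ball, Prod.dist_eq, Subtype.dist_eq, Real.dist_eq, Real.dist_eq]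
    exact max_lt hx hu
  · intro h p hp hpr
    obtain ⟨ε, hε, hsub⟩ := h p hp hpr
    rw [tX0]
    refine Metric.mem_nhds_iff.2 ⟨ε, hε, fun q hq => ?_⟩
    rw [Metric.mem_ball, Prod.dist_eq, Subtype.dist_eq, Real.dist_eq, Real.dist_eq, max_lt_iff] at hq
    exact hsub q.1 q.2 hq.1 hq.2


lemma t1_Y : @T1Space Ysp tY := by
  letI := tY
  refine @T1Space.mk Ysp tY (fun y => ?_)
  rw [← isOpen_compl_iff]
  rw [isOpen_tY]
  intro p hp hpr
  have hne : gY p ≠ gY y := by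
    intro h
    exact hp (Set.mem_singleton_iff.2 (Y_eq_of_fst_eq h hpr))
  refine ⟨|gY p - gY y|, abs_pos.2 (sub_ne_zero.2 hne), fun q hq hqy => ?_⟩
  rw [Set.mem_singleton_iff] at hqy
  subst hqy
  rw [abs_sub_comm] at hq
  exact lt_irrefl _ hq

lemma regular_Y : @RegularSpace Ysp tY := by
  letI := tY
  refine @RegularSpace.of_exists_mem_nhds_isClosed_subset Ysp tY ?_
  intro a s hs
  by_cases ha : Irrational (gY a)
  · refine ⟨{a}, ?_, ?_, ?_⟩
    · rw [nhdsY_irr ha]; exact rfl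
    · rw [← isOpen_compl_iff, isOpen_tY]
      intro p hp hpr
      have hne : gY p ≠ gY a := fun h => hpr (h ▸ ha)
      have hp2 : p ≠ a := fun h => hp (Set.mem_singleton_iff.2 h)
      refine ⟨|gY p - gY a|, abs_pos.2 (sub_ne_zero.2 hne), fun q hq hqa => ?_⟩
      rw [Set.mem_singleton_iff] at hqa
      subst hqa
      rw [abs_sub_comm] at hq
      exact lt_irrefl _ hq
    · rw [Set.singleton_subset_iff]
      exact mem_of_mem_nhds hs
  · rw [nhdsY_rat ha] at hs
    obtain ⟨E, hE, hsub⟩ := Filter.mem_comap.1 hs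
    obtain ⟨ε, hε, hball⟩ := Metric.mem_nhds_iff.1 hE
    refine ⟨{q : Ysp | |gY q - gY a| ≤ ε/2}, ?_, ?_, ?_⟩
    · rw [nhdsY_rat ha]
      refine Filter.mem_comap.2 ⟨Metric.ball (gY a) (ε/2), Metric.ball_mem_nhds _ (by positivity),
        fun q hq => ?_⟩
      rw [Set.mem_preimage, Metric.mem_ball, Real.dist_eq] at hq
      exact le_of_lt hq
    · rw [← isOpen_compl_iff, isOpen_tY]
      intro p hp hpr
      rw [Set.mem_compl_iff, Set.mem_setOf_eq, not_le] at hp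
      refine ⟨|gY p - gY a| - ε/2, by linarith, fun q hq hq2 => ?_⟩
      rw [Set.mem_setOf_eq] at hq2
      have := abs_sub_abs_le_abs_sub (gY p - gY a) (gY q - gY a)
      simp only [sub_sub_sub_cancel_right] at this
      rw [abs_sub_comm (gY q) (gY p)] at hq
      linarith
    · intro q hq
      rw [Set.mem_setOf_eq] at hq
      refine hsub (Set.mem_preimage.2 (hball ?_))
      rw [Metric.mem_ball, Real.dist_eq]
      linarith

lemma fc_Y : @FirstCountableTopology Ysp tY := by
  refine @FirstCountableTopology.mk Ysp tY (fun a => ?_)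
  by_cases ha : Irrational (gY a)
  · rw [nhdsY_irr ha, ← Filter.principal_singleton]
    infer_instance
  · rw [nhdsY_rat ha]
    infer_instance

lemma submetrizable_X : @Submetrizable Xsp tX :=
  ⟨tX0, isolify_le, by rw [tX0]; infer_instance⟩


lemma cont_f : @Continuous Xsp Ysp tX tY fXY := by
  rw [@continuous_def Xsp Ysp tX tY]
  intro O hO
  rw [isOpen_tX]
  intro p hp hpr
  have hgp : ¬ Irrational (gY (fXY p)) := by rwa [gY_fXY]
  obtain ⟨ε, hε, hsub⟩ := isOpen_tY.1 hO (fXY p) hp hgp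
  refine ⟨ε, hε, fun x u hx _ => ?_⟩
  refine hsub (fXY (x, u)) ?_
  rw [gY_fXY, gY_fXY]
  exact hx

lemma exists_near (t : ℝ) (ht : t ∈ UI) {δ : ℝ} (hδ : 0 < δ) (S : Set ℝ) (hS : Dense S) :
    ∃ t' ∈ UI, |t' - t| < δ ∧ t' ∈ S := by
  rcases le_or_gt t (1/2) with hhalf | hhalf
  · have hcd : t < min (t + δ) 1 := lt_min (by linarith) (by linarith [ht.1])
    obtain ⟨t', ht'S, ht'⟩ := hS.exists_mem_open isOpen_Ioo (Set.nonempty_Ioo.2 hcd)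
    have h1 := ht'.1
    have h2 := lt_min_iff.1 ht'.2
    exact ⟨t', ⟨by linarith [ht.1], by linarith⟩,
      by rw [abs_lt]; constructor <;> linarith, ht'S⟩
  · have hcd : max (t - δ) 0 < t := max_lt (by linarith) (by linarith)
    obtain ⟨t', ht'S, ht'⟩ := hS.exists_mem_open isOpen_Ioo (Set.nonempty_Ioo.2 hcd)
    have h1 := max_lt_iff.1 ht'.1
    have h2 := ht'.2
    exact ⟨t', ⟨le_of_lt h1.2, by linarith [ht.2]⟩,
      by rw [abs_lt]; constructor <;> linarith, ht'S⟩

lemma fXY_snd_rat {x : ℝ} {u : ↥UI} (hu : ¬ Irrational (u : ℝ)) :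
    fXY (x, u) = ⟨(x, false), Or.inr rfl⟩ := by
  unfold fXY
  exact dif_neg (fun h : Irrational x ∧ Irrational ((u : ℝ)) => hu h.2)

lemma fXY_both_irr {x : ℝ} {u : ↥UI} (hx : Irrational x) (hu : Irrational (u : ℝ)) :
    fXY (x, u) = ⟨(x, true), Or.inl hx⟩ := by
  unfold fXY
  exact dif_pos ⟨hx, hu⟩

lemma open_f : @IsOpenMap Xsp Ysp tX tY fXY := by
  intro O hO
  rw [isOpen_tY]
  rintro y ⟨p, hpO, rfl⟩ hyr
  have hpr : ¬ Irrational p.1 := by rwa [gY_fXY] at hyr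
  obtain ⟨ε, hε, hsub⟩ := isOpen_tX.1 hO p hpO hpr
  refine ⟨ε, hε, ?_⟩
  rintro ⟨⟨x, b⟩, hb⟩ hq
  rw [gY_fXY] at hq
  cases b with
  | false =>
      obtain ⟨t', ht'UI, ht'δ, ht'S⟩ :=
        exists_near (p.2 : ℝ) p.2.2 hε _ Rat.denseRange_cast
      obtain ⟨q', hq'⟩ := ht'S
      have hrat : ¬ Irrational t' := fun h => h ⟨q', hq'⟩
      refine ⟨(x, ⟨t', ht'UI⟩), hsub x ⟨t', ht'UI⟩ hq ht'δ, ?_⟩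
      exact fXY_snd_rat hrat
  | true =>
      have hx : Irrational x := hb.resolve_right (by simp)
      obtain ⟨t', ht'UI, ht'δ, ht'S⟩ :=
        exists_near (p.2 : ℝ) p.2.2 hε _ dense_irrational
      refine ⟨(x, ⟨t', ht'UI⟩), hsub x ⟨t', ht'UI⟩ hq ht'δ, ?_⟩
      exact fXY_both_irr hx ht'S

lemma surj_f : Function.Surjective fXY := by
  rintro ⟨⟨x, b⟩, hb⟩
  cases b with
  | false =>
      refine ⟨(x, ⟨0, by norm_num⟩), ?_⟩
      exact fXY_snd_rat (by simp)
  | true =>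
      have hx : Irrational x := hb.resolve_right (by simp)
      have h2 : Irrational (Real.sqrt 2) := irrational_sqrt_two
      have hs2 : (1:ℝ) ≤ Real.sqrt 2 ∧ Real.sqrt 2 ≤ 2 := by
        constructor
        · nlinarith [Real.sq_sqrt (by norm_num : (2:ℝ) ≥ 0), Real.sqrt_nonneg 2]
        · nlinarith [Real.sq_sqrt (by norm_num : (2:ℝ) ≥ 0), Real.sqrt_nonneg 2]
      have hmem : Real.sqrt 2 - 1 ∈ UI := ⟨by linarith [hs2.1], by linarith [hs2.2]⟩
      have hirr : Irrational ((⟨Real.sqrt 2 - 1, hmem⟩ : ↥UI) : ℝ) := by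
        have := h2.sub_ratCast (q := 1)
        simpa using this
      refine ⟨(x, ⟨Real.sqrt 2 - 1, hmem⟩), ?_⟩
      exact fXY_both_irr hx hirr

lemma closed_f : @IsClosedMap Xsp Ysp tX tY fXY := by
  intro C hC
  letI := tY
  rw [← isOpen_compl_iff, isOpen_tY]
  intro y hy hyr
  have hfiber : ∀ u : ↥UI, ((gY y, u) : Xsp) ∈ Cᶜ := by
    intro u hmem
    refine hy ⟨(gY y, u), hmem, ?_⟩
    refine Y_eq_of_fst_eq ?_ ?_
    · rw [gY_fXY]
    · rwa [gY_fXY]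
  have hCo : @IsOpen Xsp tX Cᶜ := by
    letI := tX
    exact hC.isOpen_compl
  have key : ∀ u : ↥UI, ∃ ε > 0, ∀ (x : ℝ) (u' : ↥UI),
      |x - gY y| < ε → |(u' : ℝ) - (u : ℝ)| < ε → (x, u') ∈ Cᶜ := by
    intro u
    exact isOpen_tX.1 hCo (gY y, u) (hfiber u) hyr
  choose ε hε hεC using key
  obtain ⟨F, hF⟩ := isCompact_Icc.elim_finite_subcover
    (fun u : ↥UI => Metric.ball (u : ℝ) (ε u)) (fun u => Metric.isOpen_ball)
    (fun x hx => Set.mem_iUnion.2 ⟨⟨x, hx⟩, by simpa [Metric.mem_ball] using hε ⟨x, hx⟩⟩)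
  have hFne : F.Nonempty := by
    have h0 : (0:ℝ) ∈ Set.Icc (0:ℝ) 1 := by norm_num
    obtain ⟨u, hu⟩ := Set.mem_iUnion.1 (hF h0)
    obtain ⟨hu1, _⟩ := Set.mem_iUnion.1 hu
    exact ⟨u, hu1⟩
  set δ := F.inf' hFne ε with hδdef
  have hδpos : 0 < δ := (Finset.lt_inf'_iff hFne).2 (fun u _ => hε u)
  refine ⟨δ, hδpos, ?_⟩
  rintro q hq ⟨p, hpC, rfl⟩
  rw [gY_fXY] at hq
  have hp2 : (p.2 : ℝ) ∈ Set.Icc (0:ℝ) 1 := p.2.2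
  obtain ⟨u, hu⟩ := Set.mem_iUnion.1 (hF hp2)
  obtain ⟨huF, hub⟩ := Set.mem_iUnion.1 hu
  rw [Metric.mem_ball, Real.dist_eq] at hub
  have hδu : δ ≤ ε u := Finset.inf'_le _ huF
  exact hεC u p.1 p.2 (lt_of_lt_of_le hq hδu) hub hpC

def h0 : ℝ → Ysp := fun x => ⟨(x, false), Or.inr rfl⟩
open Classical in
noncomputable def h1 : ℝ → Ysp := fun x =>
  if h : Irrational x then ⟨(x, true), Or.inl h⟩ else ⟨(x, false), Or.inr rfl⟩

@[simp] lemma gY_h0 (x : ℝ) : gY (h0 x) = x := rfl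
@[simp] lemma gY_h1 (x : ℝ) : gY (h1 x) = x := by unfold h1; split <;> rfl

lemma h1_rat {x : ℝ} (hx : ¬ Irrational x) : h1 x = h0 x := by
  unfold h1 h0; rw [dif_neg hx]

lemma h1_irr {x : ℝ} (hx : Irrational x) : h1 x = ⟨(x, true), Or.inl hx⟩ := by
  unfold h1; rw [dif_pos hx]

lemma h0_ne_h1 {x : ℝ} (hx : Irrational x) : h0 x ≠ h1 x := by
  rw [h1_irr hx]
  intro h
  exact Bool.false_ne_true (congrArg (fun y : Ysp => y.1.2) h)

lemma not_submet_Y : ¬ @Submetrizable Ysp tY := by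
  rintro ⟨σ, hle, hmet⟩
  letI := σ
  letI : MetricSpace Ysp := @TopologicalSpace.metrizableSpaceMetric Ysp σ hmet
  set s : ℝ → ℝ := fun x => dist (h0 x) (h1 x) with hsdef
  -- tendsto of h0, h1 at rational points
  have hten : ∀ (h : ℝ → Ysp), (∀ x, gY (h x) = x) → ∀ x : ℝ, ¬ Irrational x →
      Filter.Tendsto h (nhds x) (nhds (h0 x)) := by
    intro h hgh x hx
    have h1t : Filter.Tendsto h (nhds x) (@nhds Ysp tY (h0 x)) := by
      rw [nhdsY_rat (by simpa using hx)]
      rw [Filter.tendsto_comap_iff]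
      have : gY ∘ h = id := funext hgh
      rw [this]
      simpa using Filter.tendsto_id
    exact h1t.mono_right (nhds_mono hle)
  have hcont : ∀ x : ℝ, ¬ Irrational x → Filter.Tendsto s (nhds x) (nhds 0) := by
    intro x hx
    have h0t := hten h0 gY_h0 x hx
    have h1t' := hten h1 gY_h1 x hx
    have h1t : Filter.Tendsto h1 (nhds x) (nhds (h1 x)) := by rwa [h1_rat hx]
    have := h0t.dist h1t
    rwa [h1_rat hx, dist_self] at this
  -- the closed sets
  set F : ℕ → Set ℝ := fun n => closure {x | 1/(n+1 : ℝ) ≤ s x} with hFdef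
  have hFrat : ∀ (n : ℕ) (x : ℝ), ¬ Irrational x → x ∉ F n := by
    intro n x hx hmem
    have hnbd : {z | s z < 1/(n+1 : ℝ)} ∈ nhds x :=
      hcont x hx (Iio_mem_nhds (by positivity))
    obtain ⟨z, hz1, hz2⟩ := (mem_closure_iff_nhds.1 hmem) _ hnbd
    rw [Set.mem_setOf_eq] at hz1 hz2
    linarith
  have hFdense : ∀ n, Dense (F n)ᶜ := by
    intro n
    rw [← interior_eq_empty_iff_dense_compl]
    rw [Set.eq_empty_iff_forall_notMem]
    intro x hxint
    obtain ⟨q, hq⟩ := Rat.denseRange_cast.exists_mem_open isOpen_interior ⟨x, hxint⟩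
    exact hFrat n _ (Rat.not_irrational q) (interior_subset hq)
  let G : ℕ ⊕ ℚ → Set ℝ := Sum.elim (fun n => (F n)ᶜ) (fun q => {(q : ℝ)}ᶜ)
  have hGdense : Dense (⋂ i, G i) := by
    refine dense_iInter_of_isOpen ?_ ?_
    · rintro (n | q)
      · exact isClosed_closure.isOpen_compl
      · exact isOpen_compl_singleton
    · rintro (n | q)
      · exact hFdense n
      · exact dense_compl_singleton _
  obtain ⟨x, hx⟩ := hGdense.nonempty
  rw [Set.mem_iInter] at hx
  have hxirr : Irrational x := by
    rintro ⟨q, rfl⟩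
    exact hx (Sum.inr q) rfl
  have hpos : 0 < s x := dist_pos.2 (h0_ne_h1 hxirr)
  have hsmall : ∀ n : ℕ, s x < 1/(n+1 : ℝ) := by
    intro n
    by_contra h
    exact hx (Sum.inl n) (subset_closure (not_lt.1 h))
  obtain ⟨n, hn⟩ := exists_nat_one_div_lt hpos
  exact absurd (hsmall n) (not_lt.2 hn.le)

/-- There exist a submetrizable space `X`, a regular first-countable space `Y` that is not
submetrizable, and an open-closed continuous surjection `f : X → Y`. -/
theorem exists_openClosed_image_not_submetrizable :
    ∃ (X Y : Type) (tX : TopologicalSpace X) (tY : TopologicalSpace Y) (f : X → Y),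
      @Submetrizable X tX ∧
      @T1Space Y tY ∧ @RegularSpace Y tY ∧
      @FirstCountableTopology Y tY ∧
      ¬ @Submetrizable Y tY ∧
      @Continuous X Y tX tY f ∧ Function.Surjective f ∧
      @IsOpenMap X Y tX tY f ∧ @IsClosedMap X Y tX tY f :=
  ⟨Xsp, Ysp, tX, tY, fXY, submetrizable_X, t1_Y, regular_Y, fc_Y, not_submet_Y,
    cont_f, surj_f, open_f, closed_f⟩

end Construction
end
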